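/- Let L be a finite lattice that is not a chain (i.e., the order on L is not linear). Then there exist finite transversal matroids M and M' such that M and M' are not isomorphic, M and M' have the same configuration, and the lattice of cyclic flats of M (and likewise that of M'), ordered by inclusion, is order-isomorphic to L. -/

import Mathlib

open Set Matroid

namespace Paper

variable {α : Type*} {β : Type*}

/-- The rank of a set in a matroid: the largest cardinality of an independent subset. -/
noncomputable def rnk (M : Matroid α) (X : Set α) : ℕ :=
  sSup {n | ∃ I, M.Indep I ∧ I ⊆ X ∧ I.ncard = n}

/-- A coloop: an element contained in every base. -/
def IsColoop (M : Matroid α) (e : α) : Prop := ∀ B, M.IsBase B → e ∈ B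

/-- A cyclic flat: a flat whose restriction has no coloops. -/
def CyclicFlat (M : Matroid α) (F : Set α) : Prop :=
  M.IsFlat F ∧ ∀ e ∈ F, ¬ IsColoop (M ↾ F) e

/-- A modular pair of sets. -/
def ModularPair (M : Matroid α) (X Y : Set α) : Prop :=
  rnk M X + rnk M Y = rnk M (X ∪ Y) + rnk M (X ∩ Y)

/-- Two matroids have the same configuration: there is an inclusion-order isomorphism
between their collections of cyclic flats preserving size and rank. -/
def SameConfig (M : Matroid α) (N : Matroid β) : Prop :=
  ∃ φ : {F : Set α // CyclicFlat M F} ≃o {F : Set β // CyclicFlat N F},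
    ∀ F : {F : Set α // CyclicFlat M F},
      (φ F : Set β).ncard = (F : Set α).ncard ∧ rnk N (φ F : Set β) = rnk M (F : Set α)

/-- Matroid isomorphism: a bijection between ground sets mapping independent sets
onto independent sets. -/
def IsIso (M : Matroid α) (N : Matroid β) : Prop :=
  ∃ f : α → β, Set.BijOn f M.E N.E ∧ ∀ I ⊆ M.E, (M.Indep I ↔ N.Indep (f '' I))

/-- A matroid is configuration unique if every (finite) matroid with the same
configuration is isomorphic to it. -/
def ConfigUnique (M : Matroid α) : Prop :=
  ∀ {γ : Type*} (N : Matroid γ), N.Finite → SameConfig M N → IsIso M N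

/-- A circuit: a minimal dependent set. -/
def IsCircuit (M : Matroid α) (C : Set α) : Prop :=
  C ⊆ M.E ∧ ¬ M.Indep C ∧ ∀ x ∈ C, M.Indep (C \ {x})

/-- A matroid is connected if its ground set is nonempty and any two distinct
elements lie in a common circuit. -/
def MatConnected (M : Matroid α) : Prop :=
  M.E.Nonempty ∧ ∀ ⦃e f⦄, e ∈ M.E → f ∈ M.E → e ≠ f → ∃ C, IsCircuit M C ∧ e ∈ C ∧ f ∈ C

/-- The connected component of `e`: all elements sharing a circuit with `e` (plus `e`). -/
def component (M : Matroid α) (e : α) : Set α :=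
  {f ∈ M.E | e = f ∨ ∃ C, IsCircuit M C ∧ e ∈ C ∧ f ∈ C}

/-- `(A 1, …, A r)` is a presentation of the transversal matroid `M`: the independent
sets of `M` are exactly the partial transversals. -/
def IsPresentation (M : Matroid α) (r : ℕ) (A : ℕ → Set α) : Prop :=
  (∀ i ∈ Set.Icc 1 r, A i ⊆ M.E) ∧
  ∀ I : Set α, M.Indep I ↔ I ⊆ M.E ∧ ∃ φ : α → ℕ, Set.InjOn φ I ∧
    ∀ x ∈ I, φ x ∈ Set.Icc 1 r ∧ x ∈ A (φ x)

/-- A transversal matroid. -/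
def IsTransversalMatroid (M : Matroid α) : Prop := ∃ r A, IsPresentation M r A

/-- A fundamental (principal) transversal matroid: one with a presentation in which each
set has an element belonging to no other set. -/
def IsFundamental (M : Matroid α) : Prop :=
  ∃ (r : ℕ) (A : ℕ → Set α), IsPresentation M r A ∧
    ∀ i ∈ Set.Icc 1 r, ∃ e ∈ A i, ∀ j ∈ Set.Icc 1 r, j ≠ i → e ∉ A j

/-- `M` is the lattice path matroid `M[P,Q]` on `[n]` determined by the positions
`l 1 < ⋯ < l r` of the north steps of the upper path and `u 1 < ⋯ < u r` of those of the
lower path: the transversal matroid on `[n]` presented by the intervals `N i = [l i, u i]`. -/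
def IsLPM (n r : ℕ) (l u : ℕ → ℕ) (M : Matroid ℕ) : Prop :=
  1 ≤ r ∧ r ≤ n ∧
  StrictMonoOn l (Set.Icc 1 r) ∧ StrictMonoOn u (Set.Icc 1 r) ∧
  (∀ i ∈ Set.Icc 1 r, l i ∈ Set.Icc 1 n ∧ u i ∈ Set.Icc 1 n ∧ l i ≤ u i) ∧
  M.E = Set.Icc 1 n ∧
  IsPresentation M r (fun i => Set.Icc (l i) (u i))

/-- A lattice path matroid: any matroid isomorphic to some `M[P,Q]`. -/
def IsLatticePathMatroid (M : Matroid α) : Prop :=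
  ∃ (n r : ℕ) (l u : ℕ → ℕ) (M₀ : Matroid ℕ), IsLPM n r l u M₀ ∧ IsIso M₀ M

/-- `[a] = {1, …, a}` is an initial connected flat: `a ∉ {l 1, …, l r}` and
`a + 1 ∈ {l 1, …, l r}`. -/
def InitialFlat (r : ℕ) (l : ℕ → ℕ) (a : ℕ) : Prop :=
  (∀ i ∈ Set.Icc 1 r, l i ≠ a) ∧ ∃ i ∈ Set.Icc 1 r, l i = a + 1

/-- `[b, n]` is a final connected flat: `b - 1 ∈ {u 1, …, u r}` and
`b ∉ {u 1, …, u r}`. -/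
def FinalFlat (r : ℕ) (u : ℕ → ℕ) (b : ℕ) : Prop :=
  (∃ i ∈ Set.Icc 1 r, u i = b - 1) ∧ ∀ i ∈ Set.Icc 1 r, u i ≠ b

/-- The pair `([a], [b,n])` is mixed: `a₁ < b₁` and `a₂ > b₂`, where
`a₂ = #{i : l i ≤ a}`, `a₁ = a - a₂`, `b₂ = #{i : u i ≤ b-1}`, `b₁ = b - 1 - b₂`. -/
def Mixed (r : ℕ) (l u : ℕ → ℕ) (a b : ℕ) : Prop :=
  a - {i ∈ Set.Icc 1 r | l i ≤ a}.ncard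
      < (b - 1) - {i ∈ Set.Icc 1 r | u i ≤ b - 1}.ncard ∧
  {i ∈ Set.Icc 1 r | u i ≤ b - 1}.ncard < {i ∈ Set.Icc 1 r | l i ≤ a}.ncard

/-- A set of integers is an interval (order-convex set). -/
def IsInterval (S : Set ℕ) : Prop :=
  ∀ x ∈ S, ∀ y ∈ S, ∀ z, x ≤ z → z ≤ y → z ∈ S

/-- `R` is the rook matroid `R[P,Q]` on `[n]`: the transversal matroid presented by
`A i = {i} ∪ {r + j : l i - i + 1 ≤ j ≤ u i - i}`. -/
def IsRook (n r : ℕ) (l u : ℕ → ℕ) (R : Matroid ℕ) : Prop :=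
  R.E = Set.Icc 1 n ∧
  IsPresentation R r
    (fun i => insert i ((fun j => r + j) '' Set.Icc (l i - i + 1) (u i - i)))

/-- `M = N +_X e` is the principal extension of `N` adding `e` freely to `X`. -/
def IsPrincipalExt (N : Matroid α) (X : Set α) (e : α) (M : Matroid α) : Prop :=
  M.E = insert e N.E ∧ ∀ Z ⊆ N.E,
    rnk M Z = rnk N Z ∧
    (X ⊆ N.closure Z → rnk M (insert e Z) = rnk N Z) ∧
    (¬ X ⊆ N.closure Z → rnk M (insert e Z) = rnk N Z + 1)

set_option linter.unusedSectionVars false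

section Abstract

variable {L : Type*} [Lattice L] [Fintype L] [BoundedOrder L]

/-- number of elements `w` with `¬ x ≤ w`; this is the rank of the cyclic flat `F x`. -/
noncomputable def rr (x : L) : ℕ := {w : L | ¬ x ≤ w}.ncard

lemma rr_bot : rr (⊥ : L) = 0 := by
  simp [rr]

lemma rr_mono {x y : L} (h : x ≤ y) : rr x ≤ rr y := by
  apply Set.ncard_le_ncard _ (Set.toFinite _)
  intro w hw hyw
  exact hw (h.trans hyw)

lemma rr_strictmono {x y : L} (h : x < y) : rr x < rr y := by
  apply Set.ncard_lt_ncard _ (Set.toFinite _)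
  constructor
  · intro w hw hyw; exact hw (h.le.trans hyw)
  · intro hsub
    have hx : x ∈ {w : L | ¬ y ≤ w} := fun hyx => h.not_ge hyx
    exact (hsub hx) le_rfl

lemma rr_add_Ici (x : L) : rr x + (Set.Ici x).ncard = Fintype.card L := by
  have h1 : {w : L | ¬ x ≤ w} = (Set.Ici x)ᶜ := by
    ext w; simp [Set.mem_Ici]
  have := Set.ncard_add_ncard_compl (Set.Ici x)
  rw [rr, h1, Nat.card_eq_fintype_card] at *
  omega

lemma rr_lt_card (x : L) : rr x < Fintype.card L := by
  have h := rr_add_Ici x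
  have : 1 ≤ (Set.Ici x).ncard := by
    have : (Set.Ici x).Nonempty := ⟨x, le_rfl⟩
    have := (Set.ncard_pos (Set.toFinite _)).mpr this
    omega
  omega

lemma rr_submod (x y : L) : rr (x ⊔ y) + rr (x ⊓ y) ≤ rr x + rr y := by
  have hU : {w : L | ¬ x ⊔ y ≤ w} = {w : L | ¬ x ≤ w} ∪ {w : L | ¬ y ≤ w} := by
    ext w; simp [sup_le_iff]; tauto
  have hI : {w : L | ¬ x ⊓ y ≤ w} ⊆ {w : L | ¬ x ≤ w} ∩ {w : L | ¬ y ≤ w} := by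
    intro w hw
    exact ⟨fun hx => hw (le_trans inf_le_left hx), fun hy => hw (le_trans inf_le_right hy)⟩
  have h2 : ({w : L | ¬ x ⊓ y ≤ w}).ncard ≤ ({w : L | ¬ x ≤ w} ∩ {w : L | ¬ y ≤ w}).ncard :=
    Set.ncard_le_ncard hI (Set.toFinite _)
  have h3 := Set.ncard_union_add_ncard_inter {w : L | ¬ x ≤ w} {w : L | ¬ y ≤ w}
    (Set.toFinite _) (Set.toFinite _)
  show ({w : L | ¬ x ⊔ y ≤ w}).ncard + ({w : L | ¬ x ⊓ y ≤ w}).ncard ≤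
    ({w : L | ¬ x ≤ w}).ncard + ({w : L | ¬ y ≤ w}).ncard
  rw [hU]
  omega

lemma rr_submod_strict {x y : L} (hxy : ¬ x ≤ y) (hyx : ¬ y ≤ x) :
    rr (x ⊔ y) + rr (x ⊓ y) + 1 ≤ rr x + rr y := by
  have hU : {w : L | ¬ x ⊔ y ≤ w} = {w : L | ¬ x ≤ w} ∪ {w : L | ¬ y ≤ w} := by
    ext w; simp [sup_le_iff]; tauto
  have hmA : x ⊓ y ∈ {w : L | ¬ x ≤ w} := fun hc => hxy (hc.trans inf_le_right)
  have hmB : x ⊓ y ∈ {w : L | ¬ y ≤ w} := fun hc => hyx (hc.trans inf_le_left)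
  have hnm : x ⊓ y ∉ {w : L | ¬ x ⊓ y ≤ w} := fun hc => hc le_rfl
  have hI : insert (x ⊓ y) {w : L | ¬ x ⊓ y ≤ w} ⊆ {w : L | ¬ x ≤ w} ∩ {w : L | ¬ y ≤ w} := by
    rintro w (rfl | hw)
    · exact ⟨hmA, hmB⟩
    · exact ⟨fun hx => hw (le_trans inf_le_left hx), fun hy => hw (le_trans inf_le_right hy)⟩
  have h2 : ({w : L | ¬ x ⊓ y ≤ w}).ncard + 1 ≤
      ({w : L | ¬ x ≤ w} ∩ {w : L | ¬ y ≤ w}).ncard := by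
    have := Set.ncard_le_ncard hI (Set.toFinite _)
    rwa [Set.ncard_insert_of_notMem hnm (Set.toFinite _)] at this
  have h3 := Set.ncard_union_add_ncard_inter {w : L | ¬ x ≤ w} {w : L | ¬ y ≤ w}
    (Set.toFinite _) (Set.toFinite _)
  show ({w : L | ¬ x ⊔ y ≤ w}).ncard + ({w : L | ¬ x ⊓ y ≤ w}).ncard + 1 ≤
    ({w : L | ¬ x ≤ w}).ncard + ({w : L | ¬ y ≤ w}).ncard
  rw [hU]
  omega

variable [Nonempty L]

variable (E : Set ℕ) (u : ℕ → Set L)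

/-- The prospective cyclic flat attached to `x`. -/
def FF (x : L) : Set ℕ := {e ∈ E | x ∈ u e}

/-- Independence: bounded intersection with every prospective cyclic flat. -/
def Ind (I : Set ℕ) : Prop := I ⊆ E ∧ ∀ x : L, (I ∩ FF E u x).ncard ≤ rr x

/-- The rank formula value. -/
noncomputable def mval (X : Set ℕ) : ℕ :=
  Finset.univ.inf' Finset.univ_nonempty (fun x : L => rr x + (X \ FF E u x).ncard)

/-- The hypotheses making everything work. -/
structure Good : Prop where
  finE : E.Finite
  hup : ∀ ⦃e⦄, e ∈ E → ∀ ⦃x y : L⦄, x ≤ y → x ∈ u e → y ∈ u e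
  htop : ∀ e ∈ E, (⊤ : L) ∈ u e
  hsub : ∀ x y : L, rr (x ⊔ y) + rr (x ⊓ y)
      + ((FF E u x ∩ FF E u y) \ FF E u (x ⊓ y)).ncard ≤ rr x + rr y
  hgap : ∀ x y : L, ¬ x ≤ y → Fintype.card L ≤ (FF E u x \ FF E u y).ncard
  hswap : ∀ x : L, ∀ e ∈ FF E u x,
      Fintype.card L + 1 ≤ {e' ∈ FF E u x | u e' ⊆ u e}.ncard
  hhall : ∀ S : Set ℕ, S ⊆ E → S.Nonempty → (∀ x : L, (S ∩ FF E u x).ncard ≤ rr x) →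
      S.ncard + (⋂ e ∈ S, u e).ncard ≤ Fintype.card L

variable {E u}

lemma FF_subset (x : L) : FF E u x ⊆ E := fun _ he => he.1

lemma FF_mono (h : Good E u) {x y : L} (hxy : x ≤ y) : FF E u x ⊆ FF E u y :=
  fun e he => ⟨he.1, h.hup he.1 hxy he.2⟩

lemma FF_top (h : Good E u) : FF E u (⊤ : L) = E := by
  ext e; exact ⟨fun he => he.1, fun he => ⟨he, h.htop e he⟩⟩

lemma FF_sup (h : Good E u) (x y : L) : FF E u x ∪ FF E u y ⊆ FF E u (x ⊔ y) :=
  Set.union_subset (FF_mono h le_sup_left) (FF_mono h le_sup_right)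

lemma FF_finite (h : Good E u) (x : L) : (FF E u x).Finite := h.finE.subset (FF_subset x)

lemma mval_le (X : Set ℕ) (x : L) : mval E u X ≤ rr x + (X \ FF E u x).ncard :=
  Finset.inf'_le _ (Finset.mem_univ x)

lemma le_mval (X : Set ℕ) (n : ℕ) (hn : ∀ x : L, n ≤ rr x + (X \ FF E u x).ncard) :
    n ≤ mval E u X :=
  Finset.le_inf' _ _ (fun x _ => hn x)

lemma mval_exists (X : Set ℕ) : ∃ x : L, mval E u X = rr x + (X \ FF E u x).ncard := by
  obtain ⟨x, -, hx⟩ := Finset.exists_mem_eq_inf' (Finset.univ_nonempty)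
    (fun x : L => rr x + (X \ FF E u x).ncard)
  exact ⟨x, hx⟩

lemma mval_mono (h : Good E u) {X Y : Set ℕ} (hXY : X ⊆ Y) (hY : Y.Finite) :
    mval E u X ≤ mval E u Y := by
  apply le_mval
  intro x
  have := Set.ncard_le_ncard (Set.diff_subset_diff_left (t := FF E u x) hXY) (hY.diff)
  have h2 := mval_le (E := E) (u := u) X x
  omega

lemma Ind_empty : Ind E u (∅ : Set ℕ) := by
  refine ⟨Set.empty_subset _, fun x => ?_⟩
  simp

lemma Ind_subset {I J : Set ℕ} (h : Good E u) (hJ : Ind E u J) (hIJ : I ⊆ J) : Ind E u I := by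
  refine ⟨hIJ.trans hJ.1, fun x => ?_⟩
  exact le_trans (Set.ncard_le_ncard (Set.inter_subset_inter_left _ hIJ)
    ((h.finE.subset hJ.1).inter_of_left _)) (hJ.2 x)

lemma Ind_le_mval {I X : Set ℕ} (h : Good E u) (hI : Ind E u I) (hIX : I ⊆ X)
    (hX : X.Finite) : I.ncard ≤ mval E u X := by
  apply le_mval
  intro x
  have h1 : (I ∩ FF E u x).ncard + (I \ FF E u x).ncard = I.ncard :=
    Set.ncard_inter_add_ncard_diff_eq_ncard I _ (h.finE.subset hI.1)
  have h2 : (I \ FF E u x).ncard ≤ (X \ FF E u x).ncard :=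
    Set.ncard_le_ncard (Set.diff_subset_diff_left hIX) (hX.diff)
  have h3 := hI.2 x
  omega

lemma tight_sup (h : Good E u) {I : Set ℕ} (hI : Ind E u I) {x y : L}
    (hx : (I ∩ FF E u x).ncard = rr x) (hy : (I ∩ FF E u y).ncard = rr y) :
    (I ∩ FF E u (x ⊔ y)).ncard = rr (x ⊔ y) := by
  have hIfin : I.Finite := h.finE.subset hI.1
  have h1 : (I ∩ (FF E u x ∪ FF E u y)).ncard + (I ∩ (FF E u x ∩ FF E u y)).ncard
      = rr x + rr y := by
    rw [← hx, ← hy]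
    have := Set.ncard_union_add_ncard_inter (I ∩ FF E u x) (I ∩ FF E u y)
      (hIfin.inter_of_left _) (hIfin.inter_of_left _)
    rw [← Set.inter_union_distrib_left, ← Set.inter_inter_distrib_left] at this
    exact this
  have h2 : (I ∩ (FF E u x ∩ FF E u y)).ncard ≤ (I ∩ FF E u (x ⊓ y)).ncard
      + ((FF E u x ∩ FF E u y) \ FF E u (x ⊓ y)).ncard := by
    have hss : I ∩ (FF E u x ∩ FF E u y) ⊆
        (I ∩ FF E u (x ⊓ y)) ∪ ((FF E u x ∩ FF E u y) \ FF E u (x ⊓ y)) := by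
      intro e he
      by_cases hm : e ∈ FF E u (x ⊓ y)
      · exact Or.inl ⟨he.1, hm⟩
      · exact Or.inr ⟨he.2, hm⟩
    exact le_trans (Set.ncard_le_ncard hss ((hIfin.inter_of_left _).union
      (((FF_finite h x).inter_of_left _).diff))) (Set.ncard_union_le _ _)
  have h3 := h.hsub x y
  have h4 : (I ∩ FF E u (x ⊓ y)).ncard ≤ rr (x ⊓ y) := hI.2 (x ⊓ y)
  have h5 : (I ∩ (FF E u x ∪ FF E u y)).ncard ≤ (I ∩ FF E u (x ⊔ y)).ncard :=
    Set.ncard_le_ncard (Set.inter_subset_inter_right _ (FF_sup h x y)) (hIfin.inter_of_left _)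
  have h6 : (I ∩ FF E u (x ⊔ y)).ncard ≤ rr (x ⊔ y) := hI.2 (x ⊔ y)
  omega

lemma aug_core (h : Good E u) {I X : Set ℕ} (hI : Ind E u I) (hIX : I ⊆ X) (hXE : X ⊆ E)
    (hlt : I.ncard < mval E u X) : ∃ e ∈ X \ I, Ind E u (insert e I) := by
  classical
  by_contra hcon
  push_neg at hcon
  have key : ∀ e ∈ X \ I, ∃ x : L, (I ∩ FF E u x).ncard = rr x ∧ e ∈ FF E u x := by
    intro e he
    have hni := hcon e he
    have hsubE : insert e I ⊆ E := Set.insert_subset (hXE he.1) hI.1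
    rw [Ind, not_and] at hni
    have := hni hsubE
    push_neg at this
    obtain ⟨x, hx⟩ := this
    have hef : e ∈ FF E u x := by
      by_contra hef
      have : insert e I ∩ FF E u x = I ∩ FF E u x := by
        ext a
        simp only [Set.mem_inter_iff, Set.mem_insert_iff]
        constructor
        · rintro ⟨ha | ha, haF⟩
          · exact absurd (ha ▸ haF) hef
          · exact ⟨ha, haF⟩
        · exact fun ha => ⟨Or.inr ha.1, ha.2⟩
      rw [this] at hx
      exact absurd (hI.2 x) (not_le.mpr hx)
    have heI : e ∉ I ∩ FF E u x := fun h' => he.2 h'.1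
    have hins : insert e I ∩ FF E u x = insert e (I ∩ FF E u x) := by
      rw [Set.insert_inter_of_mem hef]
    rw [hins, Set.ncard_insert_of_notMem heI ((h.finE.subset hI.1).inter_of_left _)] at hx
    have := hI.2 x
    exact ⟨x, by omega, hef⟩
  set Tf : Finset L := Finset.univ.filter (fun x => (I ∩ FF E u x).ncard = rr x) with hTf
  set t : L := Tf.sup id with hts
  have ht : (I ∩ FF E u t).ncard = rr t := by
    refine Finset.sup_induction (p := fun b => (I ∩ FF E u b).ncard = rr b) ?_ ?_ ?_
    · have := hI.2 (⊥ : L)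
      rw [rr_bot] at this
      show (I ∩ FF E u ⊥).ncard = rr ⊥
      rw [rr_bot]
      omega
    · intro a ha b hb
      exact tight_sup h hI ha hb
    · intro b hb
      simpa [hTf] using hb
  have hXt : X \ FF E u t ⊆ I := by
    intro e he
    by_contra heI
    obtain ⟨x, hx, hex⟩ := key e ⟨he.1, heI⟩
    have hxT : x ∈ Tf := by simp [hTf, hx]
    have : x ≤ t := Finset.le_sup (f := id) hxT
    exact he.2 (FF_mono h this hex)
  have h1 : mval E u X ≤ rr t + (X \ FF E u t).ncard := mval_le X t
  have h2 : (X \ FF E u t).ncard ≤ (I \ FF E u t).ncard := by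
    apply Set.ncard_le_ncard _ ((h.finE.subset hI.1).diff)
    intro e he
    exact ⟨hXt he, he.2⟩
  have h3 : (I ∩ FF E u t).ncard + (I \ FF E u t).ncard = I.ncard :=
    Set.ncard_inter_add_ncard_diff_eq_ncard I _ (h.finE.subset hI.1)
  omega

lemma exists_Ind (h : Good E u) {X : Set ℕ} (hXE : X ⊆ E) :
    ∀ n, n ≤ mval E u X → ∃ I, Ind E u I ∧ I ⊆ X ∧ I.ncard = n := by
  intro n
  induction n with
  | zero => exact fun _ => ⟨∅, Ind_empty, Set.empty_subset _, Set.ncard_empty _⟩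
  | succ m ih =>
    intro hm
    obtain ⟨I, hI, hIX, hIc⟩ := ih (by omega)
    obtain ⟨e, he, hind⟩ := aug_core h hI hIX hXE (by omega)
    refine ⟨insert e I, hind, Set.insert_subset he.1 hIX, ?_⟩
    rw [Set.ncard_insert_of_notMem he.2 (h.finE.subset hI.1), hIc]

/-- The matroid. -/
noncomputable def Mat (h : Good E u) : Matroid ℕ :=
  (IndepMatroid.ofFinite h.finE (Ind E u) Ind_empty
    (fun _ _ hJ hIJ => Ind_subset h hJ hIJ)
    (by
      intro I J hI hJ hlt
      have : J.ncard ≤ mval E u (I ∪ J) :=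
        Ind_le_mval h hJ Set.subset_union_right
          (h.finE.subset (Set.union_subset hI.1 hJ.1))
      obtain ⟨e, he, hind⟩ := aug_core h hI Set.subset_union_left
        (Set.union_subset hI.1 hJ.1) (by omega)
      rcases he.1 with heI | heJ
      · exact absurd heI he.2
      · exact ⟨e, heJ, he.2, hind⟩)
    (fun _ hI => hI.1)).matroid

@[simp] lemma Mat_E (h : Good E u) : (Mat h).E = E := rfl

@[simp] lemma Mat_indep (h : Good E u) {I : Set ℕ} : (Mat h).Indep I ↔ Ind E u I := by
  simp [Mat]

lemma Mat_finite (h : Good E u) : (Mat h).Finite := ⟨h.finE⟩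

lemma rnk_eq_mval (h : Good E u) {X : Set ℕ} (hXE : X ⊆ E) : rnk (Mat h) X = mval E u X := by
  have hmem : mval E u X ∈ {n | ∃ I, (Mat h).Indep I ∧ I ⊆ X ∧ I.ncard = n} := by
    obtain ⟨I, hI, hIX, hIc⟩ := exists_Ind h hXE (mval E u X) le_rfl
    exact ⟨I, (Mat_indep h).mpr hI, hIX, hIc⟩
  have hub : ∀ n ∈ {n | ∃ I, (Mat h).Indep I ∧ I ⊆ X ∧ I.ncard = n}, n ≤ mval E u X := by
    rintro n ⟨I, hI, hIX, rfl⟩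
    exact Ind_le_mval h ((Mat_indep h).mp hI) hIX (h.finE.subset hXE)
  exact le_antisymm (csSup_le ⟨_, hmem⟩ hub) (le_csSup ⟨_, hub⟩ hmem)

lemma basis_card (h : Good E u) {I G : Set ℕ} (hGE : G ⊆ E) (hB : (Mat h).IsBasis I G) :
    I.ncard = mval E u G := by
  have hI : Ind E u I := (Mat_indep h).mp hB.indep
  have hle : I.ncard ≤ mval E u G := Ind_le_mval h hI hB.subset (h.finE.subset hGE)
  rcases lt_or_eq_of_le hle with hlt | heq
  · obtain ⟨e, he, hind⟩ := aug_core h hI hB.subset hGE hlt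
    have := hB.eq_of_subset_indep ((Mat_indep h).mpr hind) (Set.subset_insert _ _)
      (Set.insert_subset he.1 hB.subset)
    exact absurd (this ▸ Set.mem_insert e I) he.2
  · exact heq

lemma encard_lt_of_ncard_lt (h : Good E u) {I J : Set ℕ} (hI : I ⊆ E) (hJ : J ⊆ E)
    (hlt : I.ncard < J.ncard) : I.encard < J.encard := by
  rw [← (h.finE.subset hI).cast_ncard_eq, ← (h.finE.subset hJ).cast_ncard_eq]
  exact_mod_cast hlt

lemma flat_of_mval (h : Good E u) {G : Set ℕ} (hGE : G ⊆ E)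
    (hcrit : ∀ e ∈ E \ G, mval E u G < mval E u (insert e G)) : (Mat h).IsFlat G := by
  refine ⟨fun I X hIG hIX => ?_, hGE⟩
  intro e heX
  by_contra heG
  have heE : e ∈ E := hIX.subset_ground heX
  have hIc : I.ncard = mval E u G := basis_card h hGE hIG
  obtain ⟨J, hJ, hJX, hJc⟩ := exists_Ind h (Set.insert_subset heE hGE) (mval E u G + 1)
    (by have := hcrit e ⟨heE, heG⟩; omega)
  have hJi : (Mat h).Indep J := (Mat_indep h).mpr hJ
  obtain ⟨f, hf, hins⟩ := hIG.indep.augment hJi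
    (encard_lt_of_ncard_lt h (hIG.indep.subset_ground) hJ.1 (by omega))
  rcases hJX hf.1 with hfe | hfG
  · subst hfe
    have := hIX.eq_of_subset_indep hins (Set.subset_insert _ _)
      (Set.insert_subset heX hIX.subset)
    exact hf.2 (this ▸ Set.mem_insert f I)
  · have := hIG.eq_of_subset_indep hins (Set.subset_insert _ _)
      (Set.insert_subset hfG hIG.subset)
    exact hf.2 (this ▸ Set.mem_insert f I)

lemma mval_FF (h : Good E u) (x : L) : mval E u (FF E u x) = rr x := by
  apply le_antisymm
  · have := mval_le (E := E) (u := u) (FF E u x) x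
    simpa using this
  · apply le_mval
    intro y
    by_cases hxy : x ≤ y
    · have := rr_mono hxy; omega
    · have := h.hgap x y hxy
      have h2 : (FF E u x \ FF E u y).ncard ≤ (FF E u x \ FF E u y).ncard := le_rfl
      have h3 := rr_lt_card x
      omega

lemma mval_insert_FF (h : Good E u) {x : L} {e : ℕ} (he : e ∈ E \ FF E u x) :
    rr x + 1 ≤ mval E u (insert e (FF E u x)) := by
  apply le_mval
  intro y
  by_cases hxy : x ≤ y
  · by_cases hey : e ∈ FF E u y
    · have hne : x ≠ y := by rintro rfl; exact he.2 hey
      have := rr_strictmono (lt_of_le_of_ne hxy hne)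
      omega
    · have h1 : e ∈ (insert e (FF E u x)) \ FF E u y := ⟨Set.mem_insert _ _, hey⟩
      have h2 : 1 ≤ ((insert e (FF E u x)) \ FF E u y).ncard := by
        rw [Nat.one_le_iff_ne_zero, ← Nat.pos_iff_ne_zero]
        apply (Set.ncard_pos _).mpr ⟨e, h1⟩
        exact ((h.finE.insert e).subset (Set.insert_subset_insert (FF_subset x))).diff
      have := rr_mono hxy
      omega
  · have h1 : FF E u x \ FF E u y ⊆ (insert e (FF E u x)) \ FF E u y :=
      Set.diff_subset_diff_left (Set.subset_insert _ _)
    have h2 : (FF E u x \ FF E u y).ncard ≤ ((insert e (FF E u x)) \ FF E u y).ncard :=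
      Set.ncard_le_ncard h1 (((h.finE.insert e).subset
        (Set.insert_subset_insert (FF_subset x))).diff)
    have := h.hgap x y hxy
    have := rr_lt_card x
    omega

lemma FF_flat (h : Good E u) (x : L) : (Mat h).IsFlat (FF E u x) := by
  apply flat_of_mval h (FF_subset x)
  intro e he
  have := mval_insert_FF h he
  have := mval_FF h x
  omega

lemma exists_basis_avoiding (h : Good E u) {x : L} {e : ℕ} (he : e ∈ FF E u x) :
    ∃ I, Ind E u I ∧ I ⊆ FF E u x \ {e} ∧ I.ncard = rr x := by
  obtain ⟨I₀, hI₀, hI₀X, hI₀c⟩ := exists_Ind h (FF_subset x) (rr x) (by rw [mval_FF h x])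
  by_cases heI : e ∈ I₀
  · -- swap
    have hsw := h.hswap x e he
    have hfinC : {e' ∈ FF E u x | u e' ⊆ u e}.Finite :=
      (FF_finite h x).subset (fun a ha => ha.1)
    have : ¬ ({e' ∈ FF E u x | u e' ⊆ u e} ⊆ insert e I₀) := by
      intro hsub
      have h1 : {e' ∈ FF E u x | u e' ⊆ u e}.ncard ≤ (insert e I₀).ncard :=
        Set.ncard_le_ncard hsub ((h.finE.subset hI₀.1).insert e)
      have h2 : (insert e I₀).ncard ≤ I₀.ncard + 1 := Set.ncard_insert_le _ _
      have := rr_lt_card x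
      omega
    obtain ⟨e', he'C, he'I⟩ := Set.not_subset.mp this
    have he'e : e' ≠ e := fun h' => he'I (h' ▸ Set.mem_insert _ _)
    have he'I₀ : e' ∉ I₀ := fun h' => he'I (Set.mem_insert_of_mem _ h')
    refine ⟨insert e' (I₀ \ {e}), ⟨?_, ?_⟩, ?_, ?_⟩
    · exact Set.insert_subset (FF_subset x he'C.1) ((Set.diff_subset).trans hI₀.1)
    · intro y
      have hkey : (insert e' (I₀ \ {e}) ∩ FF E u y).ncard ≤ (I₀ ∩ FF E u y).ncard := by
        by_cases he'y : e' ∈ FF E u y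
        · have hey : e ∈ FF E u y := ⟨he.1, he'C.2 he'y.2⟩
          have hss : insert e' (I₀ \ {e}) ∩ FF E u y ⊆ insert e' ((I₀ ∩ FF E u y) \ {e}) := by
            rintro a ⟨ha, hay⟩
            rcases ha with rfl | ⟨haI, hae⟩
            · exact Set.mem_insert _ _
            · exact Set.mem_insert_of_mem _ ⟨⟨haI, hay⟩, hae⟩
          have h1 : (insert e' (I₀ \ {e}) ∩ FF E u y).ncard ≤
              (insert e' ((I₀ ∩ FF E u y) \ {e})).ncard :=
            Set.ncard_le_ncard hss ((((h.finE.subset hI₀.1).inter_of_left _).diff).insert _)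
          have h2 : (insert e' ((I₀ ∩ FF E u y) \ {e})).ncard ≤
              ((I₀ ∩ FF E u y) \ {e}).ncard + 1 := Set.ncard_insert_le _ _
          have heIy : e ∈ I₀ ∩ FF E u y := ⟨heI, hey⟩
          have h3 : ((I₀ ∩ FF E u y) \ {e}).ncard = (I₀ ∩ FF E u y).ncard - 1 :=
            Set.ncard_diff_singleton_of_mem heIy
          have h4 : 1 ≤ (I₀ ∩ FF E u y).ncard := by
            rw [Nat.one_le_iff_ne_zero, ← Nat.pos_iff_ne_zero]
            exact (Set.ncard_pos ((h.finE.subset hI₀.1).inter_of_left _)).mpr ⟨e, heIy⟩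
          omega
        · apply Set.ncard_le_ncard _ ((h.finE.subset hI₀.1).inter_of_left _)
          rintro a ⟨ha, hay⟩
          rcases ha with rfl | ⟨haI, -⟩
          · exact absurd hay he'y
          · exact ⟨haI, hay⟩
      exact le_trans hkey (hI₀.2 y)
    · refine Set.insert_subset ⟨he'C.1, by simpa using he'e⟩ ?_
      rintro a ⟨haI, hae⟩
      exact ⟨hI₀X haI, hae⟩
    · have h1 : e' ∉ I₀ \ {e} := fun h' => he'I₀ h'.1
      rw [Set.ncard_insert_of_notMem h1 (((h.finE.subset hI₀.1)).diff),
        Set.ncard_diff_singleton_of_mem heI, hI₀c]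
      have h4 : 1 ≤ I₀.ncard := by
        rw [Nat.one_le_iff_ne_zero, ← Nat.pos_iff_ne_zero]
        exact (Set.ncard_pos (h.finE.subset hI₀.1)).mpr ⟨e, heI⟩
      omega
  · exact ⟨I₀, hI₀, fun a ha => ⟨hI₀X ha, fun h' => heI (h' ▸ ha)⟩, hI₀c⟩

lemma basis_of_Ind_card (h : Good E u) {I G : Set ℕ} (hGE : G ⊆ E) (hI : Ind E u I)
    (hIG : I ⊆ G) (hIc : mval E u G ≤ I.ncard) : (Mat h).IsBasis I G := by
  apply ((Mat_indep h).mpr hI).isBasis_of_forall_insert hIG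
  intro f hf
  rw [Matroid.dep_iff]
  constructor
  · intro hind
    have hIndf : Ind E u (insert f I) := (Mat_indep h).mp hind
    have := Ind_le_mval h hIndf (Set.insert_subset hf.1 hIG) (h.finE.subset hGE)
    rw [Set.ncard_insert_of_notMem hf.2 (h.finE.subset hI.1)] at this
    omega
  · exact Set.insert_subset (hGE hf.1) (fun a ha => hI.1 ha)

lemma FF_cyclic (h : Good E u) (x : L) : CyclicFlat (Mat h) (FF E u x) := by
  refine ⟨FF_flat h x, fun e he hcol => ?_⟩
  obtain ⟨I, hI, hIs, hIc⟩ := exists_basis_avoiding h he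
  have hbasis : (Mat h).IsBasis I (FF E u x) :=
    basis_of_Ind_card h (FF_subset x) hI (hIs.trans Set.diff_subset)
      (by rw [mval_FF h x, hIc])
  have hbase : ((Mat h) ↾ (FF E u x)).IsBase I := hbasis.restrict_isBase
  exact (hIs (hcol I hbase)).2 rfl

lemma cyclic_of_FF (h : Good E u) {G : Set ℕ} (hG : ∃ x, G = FF E u x) :
    CyclicFlat (Mat h) G := by
  obtain ⟨x, rfl⟩ := hG
  exact FF_cyclic h x

lemma cyclic_iff_FF (h : Good E u) {G : Set ℕ} :
    CyclicFlat (Mat h) G ↔ ∃ x, G = FF E u x := by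
  refine ⟨fun ⟨hflat, hcol⟩ => ?_, cyclic_of_FF h⟩
  have hGE : G ⊆ E := hflat.subset_ground
  obtain ⟨x, hx⟩ := mval_exists (E := E) (u := u) G
  -- every element e of G has a basis of G avoiding e
  have hdel : ∀ e ∈ G, mval E u G ≤ mval E u (G \ {e}) := by
    intro e he
    have := hcol e he
    rw [IsColoop] at this
    push_neg at this
    obtain ⟨B, hB, heB⟩ := this
    have hBbasis : (Mat h).IsBasis B G := by
      rwa [Matroid.isBase_restrict_iff hGE] at hB
    have hBc : B.ncard = mval E u G := basis_card h hGE hBbasis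
    have hBsub : B ⊆ G \ {e} := fun a ha => ⟨hBbasis.subset ha, fun h' => heB (h' ▸ ha)⟩
    have := Ind_le_mval h ((Mat_indep h).mp hBbasis.indep) hBsub ((h.finE.subset hGE).diff)
    omega
  have hGsub : G ⊆ FF E u x := by
    by_contra hcon
    obtain ⟨e, heG, heF⟩ := Set.not_subset.mp hcon
    have h1 : mval E u (G \ {e}) ≤ rr x + ((G \ {e}) \ FF E u x).ncard := mval_le _ x
    have h2 : (G \ {e}) \ FF E u x = (G \ FF E u x) \ {e} := by
      ext a; constructor
      · rintro ⟨⟨ha, hae⟩, haF⟩; exact ⟨⟨ha, haF⟩, hae⟩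
      · rintro ⟨⟨ha, haF⟩, hae⟩; exact ⟨⟨ha, hae⟩, haF⟩
    have h3 : ((G \ FF E u x) \ {e}).ncard = (G \ FF E u x).ncard - 1 :=
      Set.ncard_diff_singleton_of_mem ⟨heG, heF⟩
    have h4 : 1 ≤ (G \ FF E u x).ncard := by
      rw [Nat.one_le_iff_ne_zero, ← Nat.pos_iff_ne_zero]
      exact (Set.ncard_pos ((h.finE.subset hGE).diff)).mpr ⟨e, heG, heF⟩
    have h5 := hdel e heG
    rw [h2] at h1
    omega
  have hGF : FF E u x ⊆ G := by
    by_contra hcon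
    obtain ⟨e, heF, heG⟩ := Set.not_subset.mp hcon
    have heE : e ∈ E := (FF_subset x) heF
    -- mval (insert e G) = mval G
    have h1 : mval E u (insert e G) ≤ mval E u G := by
      have : mval E u (insert e G) ≤ rr x + ((insert e G) \ FF E u x).ncard := mval_le _ x
      have h2 : (insert e G) \ FF E u x = G \ FF E u x := by
        ext a; constructor
        · rintro ⟨ha, haF⟩
          rcases ha with rfl | ha
          · exact absurd heF haF
          · exact ⟨ha, haF⟩
        · rintro ⟨ha, haF⟩; exact ⟨Set.mem_insert_of_mem _ ha, haF⟩
      rw [h2] at this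
      omega
    obtain ⟨I, hIbasis⟩ := (Mat h).exists_isBasis G (by rwa [Mat_E])
    have hIc : I.ncard = mval E u G := basis_card h hGE hIbasis
    have hIbasis2 : (Mat h).IsBasis I (insert e G) := by
      apply basis_of_Ind_card h (Set.insert_subset heE hGE) ((Mat_indep h).mp hIbasis.indep)
        (hIbasis.subset.trans (Set.subset_insert _ _))
      omega
    have := hflat.subset_of_isBasis_of_isBasis hIbasis hIbasis2
    exact heG (this (Set.mem_insert _ _))
  exact ⟨x, le_antisymm hGsub hGF |>.symm ▸ rfl⟩

lemma FF_subset_iff (h : Good E u) {x y : L} : FF E u x ⊆ FF E u y ↔ x ≤ y := by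
  constructor
  · intro hss
    by_contra hxy
    have hgap := h.hgap x y hxy
    have hcard : 0 < Fintype.card L := Fintype.card_pos
    have : (FF E u x \ FF E u y) = ∅ := Set.diff_eq_empty.mpr hss
    rw [this, Set.ncard_empty] at hgap
    omega
  · exact fun hxy => FF_mono h hxy

lemma FF_inj (h : Good E u) : Function.Injective (FF E u) := by
  intro x y hxy
  exact le_antisymm ((FF_subset_iff h).mp hxy.le) ((FF_subset_iff h).mp hxy.ge)

lemma rnk_FF (h : Good E u) (x : L) : rnk (Mat h) (FF E u x) = rr x := by
  rw [rnk_eq_mval h (FF_subset x), mval_FF h x]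

/-- cyclic flats characterised through the rank function only. -/
def RC (M : Matroid ℕ) (G : Set ℕ) : Prop :=
  G ⊆ M.E ∧ (∀ e ∈ M.E \ G, rnk M (insert e G) ≠ rnk M G) ∧
    ∀ e ∈ G, rnk M (G \ {e}) = rnk M G

lemma RC_iff_FF (h : Good E u) {G : Set ℕ} : RC (Mat h) G ↔ ∃ x, G = FF E u x := by
  constructor
  · rintro ⟨hGE, hins, hdel⟩
    rw [Mat_E] at hGE hins
    obtain ⟨x, hx⟩ := mval_exists (E := E) (u := u) G
    have hGsub : G ⊆ FF E u x := by
      by_contra hcon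
      obtain ⟨e, heG, heF⟩ := Set.not_subset.mp hcon
      have h1 : mval E u (G \ {e}) ≤ rr x + ((G \ FF E u x) \ {e}).ncard := by
        have h1' : mval E u (G \ {e}) ≤ rr x + ((G \ {e}) \ FF E u x).ncard := mval_le _ x
        have h2 : (G \ {e}) \ FF E u x = (G \ FF E u x) \ {e} := by
          ext a
          constructor
          · rintro ⟨⟨ha, hae⟩, haF⟩; exact ⟨⟨ha, haF⟩, hae⟩
          · rintro ⟨⟨ha, haF⟩, hae⟩; exact ⟨⟨ha, hae⟩, haF⟩
        rwa [h2] at h1'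
      have h3 : ((G \ FF E u x) \ {e}).ncard = (G \ FF E u x).ncard - 1 :=
        Set.ncard_diff_singleton_of_mem ⟨heG, heF⟩
      have h4 : 1 ≤ (G \ FF E u x).ncard := by
        rw [Nat.one_le_iff_ne_zero, ← Nat.pos_iff_ne_zero]
        exact (Set.ncard_pos ((h.finE.subset hGE).diff)).mpr ⟨e, heG, heF⟩
      have h5 := hdel e heG
      rw [rnk_eq_mval h ((Set.diff_subset).trans hGE), rnk_eq_mval h hGE] at h5
      omega
    have hGF : FF E u x ⊆ G := by
      by_contra hcon
      obtain ⟨e, heF, heG⟩ := Set.not_subset.mp hcon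
      have heE : e ∈ E := (FF_subset x) heF
      have h1 : mval E u (insert e G) ≤ mval E u G := by
        have h1' : mval E u (insert e G) ≤ rr x + ((insert e G) \ FF E u x).ncard :=
          mval_le _ x
        have h2 : (insert e G) \ FF E u x = G \ FF E u x := by
          ext a
          constructor
          · rintro ⟨ha, haF⟩
            rcases ha with rfl | ha
            · exact absurd heF haF
            · exact ⟨ha, haF⟩
          · rintro ⟨ha, haF⟩; exact ⟨Set.mem_insert_of_mem _ ha, haF⟩
        rw [h2] at h1'
        omega
      have h2 : mval E u G ≤ mval E u (insert e G) :=
        mval_mono h (Set.subset_insert _ _) (h.finE.subset (Set.insert_subset heE hGE))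
      have := hins e ⟨heE, heG⟩
      rw [rnk_eq_mval h (Set.insert_subset heE hGE), rnk_eq_mval h hGE] at this
      omega
    exact ⟨x, le_antisymm hGsub hGF⟩
  · rintro ⟨x, rfl⟩
    refine ⟨FF_subset x, ?_, ?_⟩
    · intro e he
      rw [Mat_E] at he
      rw [rnk_eq_mval h (Set.insert_subset he.1 (FF_subset x)), rnk_eq_mval h (FF_subset x),
        mval_FF h x]
      have := mval_insert_FF h he
      omega
    · intro e he
      rw [rnk_eq_mval h ((Set.diff_subset).trans (FF_subset x)), rnk_eq_mval h (FF_subset x),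
        mval_FF h x]
      have hle : mval E u (FF E u x \ {e}) ≤ rr x := by
        have := mval_mono h (Set.diff_subset (s := FF E u x) (t := {e})) (FF_finite h x)
        rw [mval_FF h x] at this
        exact this
      have hge : rr x ≤ mval E u (FF E u x \ {e}) := by
        obtain ⟨I, hI, hIs, hIc⟩ := exists_basis_avoiding h he
        have := Ind_le_mval h hI hIs ((FF_finite h x).diff)
        omega
      omega

/-- The lattice of cyclic flats is isomorphic to `L`. -/
noncomputable def latIso (h : Good E u) : L ≃o {F : Set ℕ // CyclicFlat (Mat h) F} where
  toFun := fun x => ⟨FF E u x, FF_cyclic h x⟩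
  invFun := fun F => Classical.choose ((cyclic_iff_FF h).mp F.2)
  left_inv := fun x =>
    (FF_inj h (Classical.choose_spec ((cyclic_iff_FF h).mp (FF_cyclic h x)))).symm
  right_inv := fun F => Subtype.ext (Classical.choose_spec ((cyclic_iff_FF h).mp F.2)).symm
  map_rel_iff' := by
    intro x y
    simp only [Equiv.coe_fn_mk, Subtype.mk_le_mk]
    exact FF_subset_iff h

lemma rnk_image {M N : Matroid ℕ} {f : ℕ → ℕ} (hf : Set.BijOn f M.E N.E)
    (hind : ∀ I ⊆ M.E, (M.Indep I ↔ N.Indep (f '' I))) {X : Set ℕ} (hX : X ⊆ M.E) :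
    rnk N (f '' X) = rnk M X := by
  have hset : {n | ∃ J, N.Indep J ∧ J ⊆ f '' X ∧ J.ncard = n}
      = {n | ∃ I, M.Indep I ∧ I ⊆ X ∧ I.ncard = n} := by
    ext n
    constructor
    · rintro ⟨J, hJ, hJX, rfl⟩
      set I : Set ℕ := {a ∈ X | f a ∈ J} with hI
      have hIX : I ⊆ X := fun a ha => ha.1
      have hfI : f '' I = J := by
        apply Set.Subset.antisymm
        · rintro b ⟨a, ha, rfl⟩
          exact ha.2
        · intro b hb
          obtain ⟨a, haX, rfl⟩ := hJX hb
          exact ⟨a, ⟨haX, hb⟩, rfl⟩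
      refine ⟨I, ?_, hIX, ?_⟩
      · rw [hind I (hIX.trans hX), hfI]; exact hJ
      · rw [← hfI, Set.ncard_image_of_injOn (hf.injOn.mono (hIX.trans hX))]
    · rintro ⟨I, hI, hIX, rfl⟩
      exact ⟨f '' I, (hind I (hIX.trans hX)).mp hI, Set.image_mono hIX,
        Set.ncard_image_of_injOn (hf.injOn.mono (hIX.trans hX))⟩
  rw [rnk, rnk, hset]

lemma RC_image {M N : Matroid ℕ} {f : ℕ → ℕ} (hf : Set.BijOn f M.E N.E)
    (hind : ∀ I ⊆ M.E, (M.Indep I ↔ N.Indep (f '' I))) {G : Set ℕ} (hG : RC M G) :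
    RC N (f '' G) := by
  obtain ⟨hGE, hins, hdel⟩ := hG
  refine ⟨(Set.image_mono hGE).trans (Set.image_subset_iff.mpr (fun a ha => hf.mapsTo ha)), ?_, ?_⟩
  · intro e' he'
    obtain ⟨e, heE, rfl⟩ := hf.surjOn he'.1
    have heG : e ∉ G := fun h' => he'.2 ⟨e, h', rfl⟩
    have himg : insert (f e) (f '' G) = f '' (insert e G) := (Set.image_insert_eq).symm
    rw [himg, rnk_image hf hind (Set.insert_subset heE hGE), rnk_image hf hind hGE]
    exact hins e ⟨heE, heG⟩
  · intro e' he'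
    obtain ⟨e, heG, rfl⟩ := he'
    have himg : f '' G \ {f e} = f '' (G \ {e}) := by
      apply Set.Subset.antisymm
      · rintro b ⟨⟨a, haG, rfl⟩, hb⟩
        refine ⟨a, ⟨haG, ?_⟩, rfl⟩
        intro hae
        apply hb
        rw [Set.mem_singleton_iff.mp hae]
        rfl
      · rintro b ⟨a, ⟨haG, hae⟩, rfl⟩
        refine ⟨⟨a, haG, rfl⟩, ?_⟩
        intro hb
        exact hae (hf.injOn (hGE haG) (hGE heG) (Set.mem_singleton_iff.mp hb))
    rw [himg, rnk_image hf hind ((Set.diff_subset).trans hGE), rnk_image hf hind hGE]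
    exact hdel e heG

section Enumeration

variable (L)

/-- An enumeration of the non-top elements of `L` by `{1, …, k-1}`. -/
lemma exists_ww : ∃ ww : ℕ → L,
    Set.InjOn ww (Set.Icc 1 (Fintype.card L - 1)) ∧
    (∀ y : L, y ≠ ⊤ → ∃ i ∈ Set.Icc 1 (Fintype.card L - 1), ww i = y) ∧
    (∀ i ∈ Set.Icc 1 (Fintype.card L - 1), ww i ≠ ⊤) := by
  classical
  set k := Fintype.card L with hk
  have hcard : Fintype.card {y : L // y ≠ ⊤} = k - 1 := by
    have h1 : Fintype.card {y : L // ¬ y = ⊤} = k - Fintype.card {y : L // y = ⊤} :=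
      Fintype.card_subtype_compl _
    have h2 : Fintype.card {y : L // y = ⊤} = 1 := Fintype.card_subtype_eq (⊤ : L)
    rw [h2] at h1
    exact h1
  set g := Fintype.equivFinOfCardEq hcard with hg
  refine ⟨fun i => if h' : i - 1 < k - 1 ∧ 1 ≤ i then (g.symm ⟨i - 1, h'.1⟩ : L) else ⊤,
    ?_, ?_, ?_⟩
  · intro i hi j hj hij
    simp only [Set.mem_Icc] at hi hj
    have hi' : i - 1 < k - 1 ∧ 1 ≤ i := ⟨by omega, hi.1⟩
    have hj' : j - 1 < k - 1 ∧ 1 ≤ j := ⟨by omega, hj.1⟩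
    simp only [dif_pos hi', dif_pos hj'] at hij
    have := g.symm.injective (Subtype.val_injective hij)
    have : i - 1 = j - 1 := by
      have := congrArg Fin.val this
      simpa using this
    omega
  · intro y hy
    set j := g ⟨y, hy⟩ with hj
    refine ⟨(j : ℕ) + 1, ?_, ?_⟩
    · simp only [Set.mem_Icc]
      have := j.2
      omega
    · have h' : (j : ℕ) + 1 - 1 < k - 1 ∧ 1 ≤ (j : ℕ) + 1 := ⟨by simpa using j.2, by omega⟩
      simp only [dif_pos h']
      have : (⟨(j : ℕ) + 1 - 1, h'.1⟩ : Fin (k - 1)) = j := by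
        apply Fin.ext; simp
      rw [this, hj, Equiv.symm_apply_apply]
  · intro i hi
    simp only [Set.mem_Icc] at hi
    have h' : i - 1 < k - 1 ∧ 1 ≤ i := ⟨by omega, hi.1⟩
    simp only [dif_pos h']
    exact (g.symm ⟨i - 1, h'.1⟩).2

end Enumeration

lemma ww_count_notin {ww : ℕ → L}
    (hinj : Set.InjOn ww (Set.Icc 1 (Fintype.card L - 1)))
    (hsurj : ∀ y : L, y ≠ ⊤ → ∃ i ∈ Set.Icc 1 (Fintype.card L - 1), ww i = y)
    (W : Set L) (hW : (⊤ : L) ∈ W) :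
    {i ∈ Set.Icc 1 (Fintype.card L - 1) | ww i ∉ W}.ncard + W.ncard = Fintype.card L := by
  have himg : ww '' {i ∈ Set.Icc 1 (Fintype.card L - 1) | ww i ∉ W} = Wᶜ := by
    apply Set.Subset.antisymm
    · rintro y ⟨i, hi, rfl⟩
      exact hi.2
    · intro y hy
      have hyt : y ≠ ⊤ := fun h' => hy (h' ▸ hW)
      obtain ⟨i, hi, rfl⟩ := hsurj y hyt
      exact ⟨i, ⟨hi, hy⟩, rfl⟩
  have hninj : Set.InjOn ww {i ∈ Set.Icc 1 (Fintype.card L - 1) | ww i ∉ W} :=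
    hinj.mono (Set.sep_subset _ _)
  have h1 : {i ∈ Set.Icc 1 (Fintype.card L - 1) | ww i ∉ W}.ncard = (Wᶜ).ncard := by
    rw [← himg, Set.ncard_image_of_injOn hninj]
  rw [h1]
  have := Set.ncard_add_ncard_compl W (Set.toFinite _) (Set.toFinite _)
  rw [Nat.card_eq_fintype_card] at this
  omega

lemma ww_count_rr {ww : ℕ → L}
    (hinj : Set.InjOn ww (Set.Icc 1 (Fintype.card L - 1)))
    (hsurj : ∀ y : L, y ≠ ⊤ → ∃ i ∈ Set.Icc 1 (Fintype.card L - 1), ww i = y)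
    (x : L) :
    {i ∈ Set.Icc 1 (Fintype.card L - 1) | ¬ x ≤ ww i}.ncard = rr x := by
  have himg : ww '' {i ∈ Set.Icc 1 (Fintype.card L - 1) | ¬ x ≤ ww i} = {w : L | ¬ x ≤ w} := by
    apply Set.Subset.antisymm
    · rintro y ⟨i, hi, rfl⟩
      exact hi.2
    · intro y hy
      have hyt : y ≠ ⊤ := fun h' => hy (h' ▸ le_top)
      obtain ⟨i, hi, rfl⟩ := hsurj y hyt
      exact ⟨i, ⟨hi, hy⟩, rfl⟩
  rw [rr, ← himg, Set.ncard_image_of_injOn (hinj.mono (Set.sep_subset _ _))]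

lemma isTransversal (h : Good E u) : IsTransversalMatroid (Mat h) := by
  classical
  obtain ⟨ww, hinj, hsurj, hnt⟩ := exists_ww L
  set k := Fintype.card L with hk
  refine ⟨k - 1, fun i => E \ FF E u (ww i), fun i _ => Set.diff_subset, fun I => ?_⟩
  rw [Mat_indep h]
  constructor
  · intro hInd
    refine ⟨hInd.1, ?_⟩
    set t : ↥I → Finset ℕ := fun e =>
      (Finset.Icc 1 (k - 1)).filter (fun i => (e : ℕ) ∈ E \ FF E u (ww i)) with ht
    have hall : ∀ s : Finset ↥I, s.card ≤ (s.biUnion t).card := by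
      intro s
      rcases s.eq_empty_or_nonempty with rfl | hs
      · simp
      set Sf : Finset ℕ := s.image Subtype.val with hSf
      set S : Set ℕ := ↑Sf with hS
      have hScard : Sf.card = s.card := Finset.card_image_of_injective _ Subtype.val_injective
      have hSI : S ⊆ I := by
        intro a ha
        simp only [hS, hSf, Finset.coe_image, Set.mem_image, Finset.mem_coe] at ha
        obtain ⟨e, -, rfl⟩ := ha
        exact e.2
      have hSE : S ⊆ E := hSI.trans hInd.1
      have hSne : S.Nonempty := by
        obtain ⟨e, he⟩ := hs
        exact ⟨(e : ℕ), Finset.mem_coe.mpr (Finset.mem_image_of_mem _ he)⟩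
      have hcons : ∀ x : L, (S ∩ FF E u x).ncard ≤ rr x := fun x =>
        le_trans (Set.ncard_le_ncard (Set.inter_subset_inter_left _ hSI)
          ((h.finE.subset hInd.1).inter_of_left _)) (hInd.2 x)
      have hhall := h.hhall S hSE hSne hcons
      set W : Set L := ⋂ e ∈ S, u e with hW
      have hWtop : (⊤ : L) ∈ W := by
        rw [hW]
        exact Set.mem_iInter₂.mpr (fun e he => h.htop e (hSE he))
      have hbi : ↑(s.biUnion t) = {i ∈ Set.Icc 1 (k - 1) | ww i ∉ W} := by
        ext i
        simp only [Finset.coe_biUnion, Set.mem_iUnion, Finset.mem_coe, Finset.mem_filter,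
          ht, Finset.mem_Icc, Set.mem_setOf_eq, Set.mem_Icc]
        constructor
        · rintro ⟨e, hes, hi, heA⟩
          refine ⟨hi, fun hiW => heA.2 ⟨heA.1, ?_⟩⟩
          have heS : (e : ℕ) ∈ S := Finset.mem_coe.mpr (Finset.mem_image_of_mem _ hes)
          have := Set.mem_iInter₂.mp hiW (e : ℕ) heS
          exact this
        · rintro ⟨hi, hiW⟩
          rw [hW] at hiW
          simp only [Set.mem_iInter, not_forall] at hiW
          obtain ⟨a, haS, hau⟩ := hiW
          have : ∃ e : ↥I, e ∈ s ∧ (e : ℕ) = a := by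
            simp only [hS, hSf, Finset.coe_image, Set.mem_image, Finset.mem_coe] at haS
            obtain ⟨e, hes, rfl⟩ := haS
            exact ⟨e, hes, rfl⟩
          obtain ⟨e, hes, rfl⟩ := this
          exact ⟨e, hes, hi, hSE haS, fun hF => hau hF.2⟩
      have hcount := ww_count_notin hinj hsurj W hWtop
      rw [← hk] at hcount
      have hcard2 : (s.biUnion t).card = {i ∈ Set.Icc 1 (k - 1) | ww i ∉ W}.ncard := by
        rw [← hbi, Set.ncard_coe_finset]
      have hScard2 : S.ncard = Sf.card := Set.ncard_coe_finset _
      omega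
    obtain ⟨f, hfinj, hft⟩ := (Finset.all_card_le_biUnion_card_iff_exists_injective t).mp hall
    refine ⟨fun a => if ha : a ∈ I then f ⟨a, ha⟩ else 0, ?_, ?_⟩
    · intro a ha b hb hab
      simp only [dif_pos ha, dif_pos hb] at hab
      have := hfinj hab
      exact congrArg Subtype.val this
    · intro a ha
      simp only [dif_pos ha]
      have := hft ⟨a, ha⟩
      simp only [ht, Finset.mem_filter, Finset.mem_Icc] at this
      exact ⟨Set.mem_Icc.mpr this.1, this.2⟩
  · rintro ⟨hIE, φ, hφinj, hφmem⟩
    refine ⟨hIE, fun x => ?_⟩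
    have hmaps : ∀ a ∈ I ∩ FF E u x, φ a ∈ {i ∈ Set.Icc 1 (k - 1) | ¬ x ≤ ww i} := by
      intro a ha
      obtain ⟨hicc, hmem⟩ := hφmem a ha.1
      refine ⟨hicc, fun hle => ?_⟩
      have hwa : ww (φ a) ∈ u a := h.hup ha.2.1 hle ha.2.2
      exact hmem.2 ⟨ha.2.1, hwa⟩
    have := Set.ncard_le_ncard_of_injOn φ hmaps (hφinj.mono Set.inter_subset_left)
      ((Set.finite_Icc 1 (k - 1)).subset (Set.sep_subset _ _))
    rwa [ww_count_rr hinj hsurj x] at this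

end Abstract

section Instantiation

variable {L : Type*} [Lattice L] [Fintype L] [BoundedOrder L] [Nonempty L]

variable (L) in
/-- Size of each block. -/
def KK : ℕ := 2 * Fintype.card L + 4

lemma KK_pos : 0 < KK L := by
  have : KK L = 2 * Fintype.card L + 4 := rfl
  omega

variable (d : L ≃ Fin (Fintype.card L))

/-- Which block an element of the ground set belongs to. -/
noncomputable def zOf (e : ℕ) : L :=
  if h : e / KK L < Fintype.card L then d.symm ⟨e / KK L, h⟩ else ⊤

variable (L) in
/-- The common ground set. -/
def EE : Set ℕ := {e | e < KK L * Fintype.card L}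

lemma EE_finite : (EE L).Finite := Set.finite_Iio _

/-- The block of `z`. -/
def Blk (z : L) : Set ℕ := (fun i => KK L * (d z : ℕ) + i) '' (Set.Iio (KK L))

lemma Blk_subset (z : L) : Blk d z ⊆ EE L := by
  rintro e ⟨i, hi, rfl⟩
  have hi' : i < KK L := hi
  have h1 : (d z : ℕ) < Fintype.card L := (d z).2
  have : KK L * (d z : ℕ) + i < KK L * ((d z : ℕ) + 1) := by
    rw [Nat.mul_add, Nat.mul_one]
    omega
  have h2 : KK L * ((d z : ℕ) + 1) ≤ KK L * Fintype.card L := Nat.mul_le_mul_left _ (by omega)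
  exact lt_of_lt_of_le this h2

lemma Blk_ncard (z : L) : (Blk d z).ncard = KK L := by
  rw [Blk, Set.ncard_image_of_injective _ (fun i j hij => by omega),
    ← Finset.coe_range, Set.ncard_coe_finset, Finset.card_range]

lemma zOf_blk {z : L} {e : ℕ} (he : e ∈ Blk d z) : zOf d e = z := by
  obtain ⟨i, hi, rfl⟩ := he
  have hdiv : (KK L * (d z : ℕ) + i) / KK L = (d z : ℕ) := by
    rw [Nat.mul_add_div (KK_pos (L := L)), Nat.div_eq_of_lt hi]
    omega
  rw [zOf, hdiv, dif_pos (d z).2]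
  have : (⟨(d z : ℕ), (d z).2⟩ : Fin (Fintype.card L)) = d z := rfl
  rw [this, Equiv.symm_apply_apply]

lemma mem_blk_zOf {e : ℕ} (he : e ∈ EE L) : e ∈ Blk d (zOf d e) := by
  have hK := KK_pos (L := L)
  have hj : e / KK L < Fintype.card L := by
    rw [Nat.div_lt_iff_lt_mul hK]
    calc e < KK L * Fintype.card L := he
    _ = Fintype.card L * KK L := Nat.mul_comm _ _
  refine ⟨e % KK L, Nat.mod_lt _ hK, ?_⟩
  rw [zOf, dif_pos hj]
  have : (d (d.symm ⟨e / KK L, hj⟩) : ℕ) = e / KK L := by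
    rw [Equiv.apply_symm_apply]
  rw [this]
  exact Nat.div_add_mod e (KK L)

/-- First set system: all filters principal. -/
noncomputable def u₁ (e : ℕ) : Set L := Set.Ici (zOf d e)

variable (a₀ b₀ : L)

/-- Second set system: one element of block `a₀` gets filter `↑a₀ ∪ ↑b₀`, one element
of block `b₀` gets filter `↑(a₀ ⊔ b₀)`. -/
noncomputable def u₂ (e : ℕ) : Set L :=
  if e = KK L * (d a₀ : ℕ) then Set.Ici a₀ ∪ Set.Ici b₀
  else if e = KK L * (d b₀ : ℕ) then Set.Ici (a₀ ⊔ b₀)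
  else Set.Ici (zOf d e)

lemma card_le_KK : Fintype.card L + 3 ≤ KK L := by
  have : KK L = 2 * Fintype.card L + 4 := rfl
  have : 0 < Fintype.card L := Fintype.card_pos
  omega

lemma good₁ : Good (EE L) (u₁ d) := by
  constructor
  · exact EE_finite
  · intro e _ x y hxy hx
    exact le_trans hx hxy
  · intro e _
    exact le_top (α := L)
  · intro x y
    have hov : (FF (EE L) (u₁ d) x ∩ FF (EE L) (u₁ d) y) \ FF (EE L) (u₁ d) (x ⊓ y) = ∅ := by
      ext e
      simp only [Set.mem_empty_iff_false, iff_false, Set.mem_diff, Set.mem_inter_iff, not_and]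
      rintro ⟨hex, hey⟩
      exact fun hem => hem ⟨hex.1, le_inf hex.2 hey.2⟩
    rw [hov, Set.ncard_empty]
    have := rr_submod x y
    omega
  · intro x y hxy
    have hsub : Blk d x ⊆ FF (EE L) (u₁ d) x \ FF (EE L) (u₁ d) y := by
      intro e he
      have hz := zOf_blk d he
      refine ⟨⟨Blk_subset d x he, ?_⟩, fun hc => hxy ?_⟩
      · show zOf d e ≤ x
        rw [hz]
      · have : zOf d e ≤ y := hc.2
        rwa [hz] at this
    have h1 := Blk_ncard d x
    have h2 : (Blk d x).ncard ≤ (FF (EE L) (u₁ d) x \ FF (EE L) (u₁ d) y).ncard :=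
      Set.ncard_le_ncard hsub ((EE_finite.subset (FF_subset x)).diff)
    have := card_le_KK (L := L)
    omega
  · intro x e he
    have hsub : Blk d (zOf d e) ⊆ {e' ∈ FF (EE L) (u₁ d) x | u₁ d e' ⊆ u₁ d e} := by
      intro e' he'
      have hz := zOf_blk d he'
      refine ⟨⟨Blk_subset d _ he', ?_⟩, ?_⟩
      · show zOf d e' ≤ x
        rw [hz]
        exact he.2
      · show Set.Ici (zOf d e') ⊆ Set.Ici (zOf d e)
        rw [hz]
    have h1 := Blk_ncard d (zOf d e)
    have h2 : (Blk d (zOf d e)).ncard ≤ {e' ∈ FF (EE L) (u₁ d) x | u₁ d e' ⊆ u₁ d e}.ncard :=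
      Set.ncard_le_ncard hsub (EE_finite.subset (fun a ha => ha.1.1))
    have := card_le_KK (L := L)
    omega
  · intro S hSE hSne hcons
    classical
    have hSfin : S.Finite := EE_finite.subset hSE
    set F : Finset ℕ := hSfin.toFinset with hF
    set v : L := F.sup (fun e => zOf d e) with hv
    have hWv : (⋂ e ∈ S, u₁ d e) = Set.Ici v := by
      ext w
      simp only [Set.mem_iInter, u₁, Set.mem_Ici]
      constructor
      · intro hw
        apply Finset.sup_le
        intro e heF
        exact hw e (hSfin.mem_toFinset.mp heF)
      · intro hw e heS
        exact le_trans (Finset.le_sup (f := fun e => zOf d e) (hSfin.mem_toFinset.mpr heS)) hw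
    have hSF : S ⊆ FF (EE L) (u₁ d) v := by
      intro e heS
      refine ⟨hSE heS, ?_⟩
      show zOf d e ≤ v
      exact Finset.le_sup (f := fun e => zOf d e) (hSfin.mem_toFinset.mpr heS)
    have h1 : S.ncard ≤ rr v := by
      have := hcons v
      rwa [Set.inter_eq_self_of_subset_left hSF] at this
    have h2 := rr_add_Ici v
    rw [hWv]
    omega

section Second

variable {hab' : True}

lemma p_ne_q (hab : ¬ a₀ ≤ b₀) : KK L * (d a₀ : ℕ) ≠ KK L * (d b₀ : ℕ) := by
  intro hEq
  have hK := KK_pos (L := L)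
  have h1 : (d a₀ : ℕ) = (d b₀ : ℕ) := by
    exact Nat.eq_of_mul_eq_mul_left hK hEq
  have h2 : d a₀ = d b₀ := Fin.ext h1
  have := d.injective h2
  exact hab (this ▸ le_rfl)

/-- Generator of the principal filter of a non-`p` element in the second system. -/
noncomputable def z₂ (e : ℕ) : L := if e = KK L * (d b₀ : ℕ) then a₀ ⊔ b₀ else zOf d e

lemma u₂_p : u₂ d a₀ b₀ (KK L * (d a₀ : ℕ)) = Set.Ici a₀ ∪ Set.Ici b₀ := if_pos rfl

lemma u₂_of_ne {e : ℕ} (hp : e ≠ KK L * (d a₀ : ℕ)) :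
    u₂ d a₀ b₀ e = Set.Ici (z₂ d a₀ b₀ e) := by
  rw [u₂, if_neg hp, z₂]
  by_cases hq : e = KK L * (d b₀ : ℕ)
  · rw [if_pos hq, if_pos hq]
  · rw [if_neg hq, if_neg hq]

lemma zOf_p : zOf d (KK L * (d a₀ : ℕ)) = a₀ :=
  zOf_blk d ⟨0, KK_pos, by simp⟩

lemma zOf_q : zOf d (KK L * (d b₀ : ℕ)) = b₀ :=
  zOf_blk d ⟨0, KK_pos, by simp⟩

lemma u₂_blk {z : L} {e : ℕ} (he : e ∈ Blk d z) (hp : e ≠ KK L * (d a₀ : ℕ))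
    (hq : e ≠ KK L * (d b₀ : ℕ)) : u₂ d a₀ b₀ e = Set.Ici z := by
  rw [u₂, if_neg hp, if_neg hq, zOf_blk d he]

lemma swap_key (x : L) (e : ℕ) (z : L) (hzx : z ≤ x) (hsub : Set.Ici z ⊆ u₂ d a₀ b₀ e) :
    Fintype.card L + 1 ≤ {e' ∈ FF (EE L) (u₂ d a₀ b₀) x | u₂ d a₀ b₀ e' ⊆ u₂ d a₀ b₀ e}.ncard := by
  have hss : Blk d z \ {KK L * (d a₀ : ℕ), KK L * (d b₀ : ℕ)} ⊆
      {e' ∈ FF (EE L) (u₂ d a₀ b₀) x | u₂ d a₀ b₀ e' ⊆ u₂ d a₀ b₀ e} := by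
    rintro e' ⟨he', hpq⟩
    simp only [Set.mem_insert_iff, Set.mem_singleton_iff, not_or] at hpq
    have hu := u₂_blk d a₀ b₀ he' hpq.1 hpq.2
    refine ⟨⟨Blk_subset d _ he', ?_⟩, ?_⟩
    · show x ∈ u₂ d a₀ b₀ e'
      rw [hu]
      exact hzx
    · rw [hu]
      exact hsub
  have h1 := Blk_ncard d z
  have h2 : (Blk d z).ncard ≤ (Blk d z \ {KK L * (d a₀ : ℕ), KK L * (d b₀ : ℕ)}).ncard
      + ({KK L * (d a₀ : ℕ), KK L * (d b₀ : ℕ)} : Set ℕ).ncard :=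
    Set.ncard_le_ncard_diff_add_ncard _ _ (Set.toFinite _)
  have h3 : ({KK L * (d a₀ : ℕ), KK L * (d b₀ : ℕ)} : Set ℕ).ncard ≤ 2 := by
    have := Set.ncard_insert_le (KK L * (d a₀ : ℕ)) ({KK L * (d b₀ : ℕ)} : Set ℕ)
    simpa using this
  have h4 : (Blk d z \ {KK L * (d a₀ : ℕ), KK L * (d b₀ : ℕ)}).ncard ≤
      {e' ∈ FF (EE L) (u₂ d a₀ b₀) x | u₂ d a₀ b₀ e' ⊆ u₂ d a₀ b₀ e}.ncard :=
    Set.ncard_le_ncard hss (EE_finite.subset (fun a ha => ha.1.1))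
  have := card_le_KK (L := L)
  omega

lemma good₂ (hab : ¬ a₀ ≤ b₀) (hba : ¬ b₀ ≤ a₀) : Good (EE L) (u₂ d a₀ b₀) := by
  constructor
  · exact EE_finite
  · intro e _ x y hxy hx
    by_cases hp : e = KK L * (d a₀ : ℕ)
    · subst hp
      rw [u₂_p] at hx ⊢
      rcases hx with h | h
      · exact Or.inl (le_trans h hxy)
      · exact Or.inr (le_trans h hxy)
    · rw [u₂_of_ne d a₀ b₀ hp] at hx ⊢
      exact le_trans hx hxy
  · intro e _
    by_cases hp : e = KK L * (d a₀ : ℕ)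
    · subst hp
      rw [u₂_p]
      exact Or.inl le_top
    · rw [u₂_of_ne d a₀ b₀ hp]
      exact le_top (α := L)
  · intro x y
    set P := KK L * (d a₀ : ℕ) with hP
    have hovsub : (FF (EE L) (u₂ d a₀ b₀) x ∩ FF (EE L) (u₂ d a₀ b₀) y)
        \ FF (EE L) (u₂ d a₀ b₀) (x ⊓ y) ⊆ {P} := by
      rintro e ⟨⟨hex, hey⟩, hem⟩
      by_contra hep
      have hu := u₂_of_ne d a₀ b₀ (by simpa using hep)
      have hx' : z₂ d a₀ b₀ e ≤ x := by have := hex.2; rwa [hu] at this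
      have hy' : z₂ d a₀ b₀ e ≤ y := by have := hey.2; rwa [hu] at this
      exact hem ⟨hex.1, by rw [hu]; exact le_inf hx' hy'⟩
    have hov1 : ((FF (EE L) (u₂ d a₀ b₀) x ∩ FF (EE L) (u₂ d a₀ b₀) y)
        \ FF (EE L) (u₂ d a₀ b₀) (x ⊓ y)).ncard ≤ 1 := by
      have := Set.ncard_le_ncard hovsub (Set.finite_singleton _)
      simpa using this
    rcases Set.eq_empty_or_nonempty ((FF (EE L) (u₂ d a₀ b₀) x ∩ FF (EE L) (u₂ d a₀ b₀) y)
        \ FF (EE L) (u₂ d a₀ b₀) (x ⊓ y)) with hemp | hne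
    · rw [hemp, Set.ncard_empty]
      have := rr_submod x y
      omega
    · obtain ⟨e, he⟩ := hne
      have hep : e = P := hovsub he
      subst hep
      obtain ⟨⟨hex, hey⟩, hem⟩ := he
      have hux : x ∈ Set.Ici a₀ ∪ Set.Ici b₀ := by have := hex.2; rwa [hP, u₂_p] at this
      have huy : y ∈ Set.Ici a₀ ∪ Set.Ici b₀ := by have := hey.2; rwa [hP, u₂_p] at this
      have hum : x ⊓ y ∉ Set.Ici a₀ ∪ Set.Ici b₀ := by
        intro hc
        exact hem ⟨hex.1, by rw [hP, u₂_p]; exact hc⟩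
      simp only [Set.mem_union, Set.mem_Ici, not_or] at hux huy hum
      have hxy : ¬ x ≤ y := by
        intro hle
        rcases hux with ha | hb
        · exact hum.1 (le_inf ha (ha.trans hle))
        · exact hum.2 (le_inf hb (hb.trans hle))
      have hyx : ¬ y ≤ x := by
        intro hle
        rcases huy with ha | hb
        · exact hum.1 (le_inf (ha.trans hle) ha)
        · exact hum.2 (le_inf (hb.trans hle) hb)
      have := rr_submod_strict hxy hyx
      omega
  · intro x y hxy
    have hss : Blk d x \ {KK L * (d a₀ : ℕ), KK L * (d b₀ : ℕ)} ⊆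
        FF (EE L) (u₂ d a₀ b₀) x \ FF (EE L) (u₂ d a₀ b₀) y := by
      rintro e ⟨he, hpq⟩
      simp only [Set.mem_insert_iff, Set.mem_singleton_iff, not_or] at hpq
      have hu := u₂_blk d a₀ b₀ he hpq.1 hpq.2
      refine ⟨⟨Blk_subset d _ he, ?_⟩, fun hc => hxy ?_⟩
      · show x ∈ u₂ d a₀ b₀ e
        rw [hu]
        exact le_rfl
      · have := hc.2
        rwa [hu] at this
    have h1 := Blk_ncard d x
    have h2 : (Blk d x).ncard ≤ (Blk d x \ {KK L * (d a₀ : ℕ), KK L * (d b₀ : ℕ)}).ncard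
        + ({KK L * (d a₀ : ℕ), KK L * (d b₀ : ℕ)} : Set ℕ).ncard :=
      Set.ncard_le_ncard_diff_add_ncard _ _ (Set.toFinite _)
    have h3 : ({KK L * (d a₀ : ℕ), KK L * (d b₀ : ℕ)} : Set ℕ).ncard ≤ 2 := by
      have := Set.ncard_insert_le (KK L * (d a₀ : ℕ)) ({KK L * (d b₀ : ℕ)} : Set ℕ)
      simpa using this
    have h4 : (Blk d x \ {KK L * (d a₀ : ℕ), KK L * (d b₀ : ℕ)}).ncard ≤
        (FF (EE L) (u₂ d a₀ b₀) x \ FF (EE L) (u₂ d a₀ b₀) y).ncard :=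
      Set.ncard_le_ncard hss ((EE_finite.subset (FF_subset x)).diff)
    have := card_le_KK (L := L)
    omega
  · intro x e he
    by_cases hep : e = KK L * (d a₀ : ℕ)
    · subst hep
      have hux : x ∈ Set.Ici a₀ ∪ Set.Ici b₀ := by have := he.2; rwa [u₂_p] at this
      rcases hux with ha | hb
      · exact swap_key d a₀ b₀ x _ a₀ ha (by rw [u₂_p]; exact Set.subset_union_left)
      · exact swap_key d a₀ b₀ x _ b₀ hb (by rw [u₂_p]; exact Set.subset_union_right)
    · have hu := u₂_of_ne d a₀ b₀ hep
      have hx' : z₂ d a₀ b₀ e ≤ x := by have := he.2; rwa [hu] at this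
      exact swap_key d a₀ b₀ x e _ hx' (by rw [hu])
  · intro S hSE hSne hcons
    classical
    set P := KK L * (d a₀ : ℕ) with hP
    have hSfin : S.Finite := EE_finite.subset hSE
    by_cases hpS : P ∈ S
    · set S₀ : Set ℕ := S \ {P} with hS₀
      have hS₀fin : S₀.Finite := hSfin.diff
      rcases Set.eq_empty_or_nonempty S₀ with hS₀e | hS₀ne
      · -- S = {P}
        have hSP : S = {P} := by
          apply Set.Subset.antisymm
          · intro a ha
            by_contra hne
            exact absurd (Set.eq_empty_iff_forall_notMem.mp hS₀e a ⟨ha, hne⟩) (fun h => h)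
          · intro a ha
            rw [Set.mem_singleton_iff.mp ha]
            exact hpS
        have hW : (⋂ e ∈ S, u₂ d a₀ b₀ e) = Set.Ici a₀ ∪ Set.Ici b₀ := by
          rw [hSP]
          simp [u₂_p, hP]
        have hWne : (Set.Ici a₀ ∪ Set.Ici b₀) ≠ Set.univ := by
          intro hc
          have : a₀ ⊓ b₀ ∈ Set.Ici a₀ ∪ Set.Ici b₀ := hc ▸ Set.mem_univ _
          rcases this with h | h
          · exact hab (le_trans (Set.mem_Ici.mp h) inf_le_right)
          · exact hba (le_trans (Set.mem_Ici.mp h) inf_le_left)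
        have hWlt : (Set.Ici a₀ ∪ Set.Ici b₀).ncard < Fintype.card L := by
          have hss : (Set.Ici a₀ ∪ Set.Ici b₀) ⊂ Set.univ := Set.ssubset_univ_iff.mpr hWne
          have := Set.ncard_lt_ncard hss (Set.toFinite _)
          rwa [Set.ncard_univ, Nat.card_eq_fintype_card] at this
        have hScard : S.ncard = 1 := by rw [hSP, Set.ncard_singleton]
        rw [hW]
        omega
      · set F : Finset ℕ := hS₀fin.toFinset with hF
        set v : L := F.sup (fun e => z₂ d a₀ b₀ e) with hv
        have hz₂le : ∀ e ∈ S₀, z₂ d a₀ b₀ e ≤ v := fun e heS =>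
          Finset.le_sup (f := fun e => z₂ d a₀ b₀ e) (hS₀fin.mem_toFinset.mpr heS)
        have hWIci : (⋂ e ∈ S, u₂ d a₀ b₀ e) ⊆ Set.Ici v := by
          intro w hw
          rw [Set.mem_iInter₂] at hw
          apply Finset.sup_le
          intro e heF
          have heS₀ : e ∈ S₀ := hS₀fin.mem_toFinset.mp heF
          have := hw e heS₀.1
          rw [u₂_of_ne d a₀ b₀ (by simpa using heS₀.2)] at this
          exact this
        by_cases hav : a₀ ≤ v ∨ b₀ ≤ v
        · have hvp : v ∈ u₂ d a₀ b₀ P := by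
            rw [hP, u₂_p]
            rcases hav with h | h
            · exact Or.inl h
            · exact Or.inr h
          have hSF : S ⊆ FF (EE L) (u₂ d a₀ b₀) v := by
            intro e heS
            refine ⟨hSE heS, ?_⟩
            by_cases hep : e = P
            · rw [hep]; exact hvp
            · rw [u₂_of_ne d a₀ b₀ (by simpa [hP] using hep)]
              exact hz₂le e ⟨heS, hep⟩
          have h1 : S.ncard ≤ rr v := by
            have := hcons v
            rwa [Set.inter_eq_self_of_subset_left hSF] at this
          have h2 := rr_add_Ici v
          have h3 : (⋂ e ∈ S, u₂ d a₀ b₀ e).ncard ≤ (Set.Ici v).ncard :=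
            Set.ncard_le_ncard hWIci (Set.toFinite _)
          omega
        · push_neg at hav
          have hvp : v ∉ u₂ d a₀ b₀ P := by
            rw [hP, u₂_p]
            rintro (h | h)
            · exact hav.1 h
            · exact hav.2 h
          have hS₀F : S₀ ⊆ FF (EE L) (u₂ d a₀ b₀) v := by
            intro e heS₀
            refine ⟨hSE heS₀.1, ?_⟩
            rw [u₂_of_ne d a₀ b₀ (by simpa using heS₀.2)]
            exact hz₂le e heS₀
          have h1 : S₀.ncard ≤ rr v := by
            have hsub : S₀ ⊆ S ∩ FF (EE L) (u₂ d a₀ b₀) v :=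
              fun e heS₀ => ⟨heS₀.1, hS₀F heS₀⟩
            have := Set.ncard_le_ncard hsub (hSfin.inter_of_left _)
            exact le_trans this (hcons v)
          have h2 : S₀.ncard = S.ncard - 1 :=
            Set.ncard_diff_singleton_of_mem hpS
          have h2' : 1 ≤ S.ncard := by
            rw [Nat.one_le_iff_ne_zero, ← Nat.pos_iff_ne_zero]
            exact (Set.ncard_pos hSfin).mpr hSne
          have h3 : (⋂ e ∈ S, u₂ d a₀ b₀ e) ⊆ Set.Ici v \ {v} := by
            intro w hw
            refine ⟨hWIci hw, ?_⟩
            intro hwv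
            rw [Set.mem_singleton_iff.mp hwv] at hw
            exact hvp (Set.mem_iInter₂.mp hw P hpS)
          have h4 : (⋂ e ∈ S, u₂ d a₀ b₀ e).ncard ≤ (Set.Ici v).ncard - 1 := by
            have := Set.ncard_le_ncard h3 (Set.toFinite _)
            rwa [Set.ncard_diff_singleton_of_mem (Set.mem_Ici.mpr le_rfl)] at this
          have h5 := rr_add_Ici v
          have h6 : 1 ≤ (Set.Ici v).ncard := by
            rw [Nat.one_le_iff_ne_zero, ← Nat.pos_iff_ne_zero]
            exact (Set.ncard_pos (Set.toFinite _)).mpr ⟨v, le_rfl⟩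
          omega
    · -- p not in S : all filters principal
      have hSfin : S.Finite := EE_finite.subset hSE
      set F : Finset ℕ := hSfin.toFinset with hF
      set v : L := F.sup (fun e => z₂ d a₀ b₀ e) with hv
      have hune : ∀ e ∈ S, u₂ d a₀ b₀ e = Set.Ici (z₂ d a₀ b₀ e) :=
        fun e heS => u₂_of_ne d a₀ b₀ (fun hc => hpS (by rw [hP, ← hc]; exact heS))
      have hWv : (⋂ e ∈ S, u₂ d a₀ b₀ e) = Set.Ici v := by
        ext w
        constructor
        · intro hw
          rw [Set.mem_iInter₂] at hw
          apply Finset.sup_le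
          intro e heF
          have heS := hSfin.mem_toFinset.mp heF
          have := hw e heS
          rwa [hune e heS] at this
        · intro hw
          rw [Set.mem_iInter₂]
          intro e heS
          rw [hune e heS]
          exact le_trans (Finset.le_sup (f := fun e => z₂ d a₀ b₀ e)
            (hSfin.mem_toFinset.mpr heS)) hw
      have hSF : S ⊆ FF (EE L) (u₂ d a₀ b₀) v := by
        intro e heS
        refine ⟨hSE heS, ?_⟩
        rw [hune e heS]
        exact Finset.le_sup (f := fun e => z₂ d a₀ b₀ e) (hSfin.mem_toFinset.mpr heS)
      have h1 : S.ncard ≤ rr v := by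
        have := hcons v
        rwa [Set.inter_eq_self_of_subset_left hSF] at this
      have h2 := rr_add_Ici v
      rw [hWv]
      omega

end Second

section Final

variable {a₀ b₀ : L}

lemma p_mem_EE : KK L * (d a₀ : ℕ) ∈ EE L := Blk_subset d a₀ ⟨0, KK_pos, by simp⟩

lemma q_mem_EE : KK L * (d b₀ : ℕ) ∈ EE L := Blk_subset d b₀ ⟨0, KK_pos, by simp⟩

lemma p_mem_FF₂a : KK L * (d a₀ : ℕ) ∈ FF (EE L) (u₂ d a₀ b₀) a₀ :=
  ⟨p_mem_EE d, by rw [u₂_p]; exact Or.inl le_rfl⟩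

lemma p_mem_FF₂b : KK L * (d a₀ : ℕ) ∈ FF (EE L) (u₂ d a₀ b₀) b₀ :=
  ⟨p_mem_EE d, by rw [u₂_p]; exact Or.inr le_rfl⟩

lemma p_not_mem_FF₂m (hab : ¬ a₀ ≤ b₀) (hba : ¬ b₀ ≤ a₀) :
    KK L * (d a₀ : ℕ) ∉ FF (EE L) (u₂ d a₀ b₀) (a₀ ⊓ b₀) := by
  rintro ⟨-, hx⟩
  rw [u₂_p] at hx
  rcases hx with h | h
  · exact hab (le_trans h inf_le_right)
  · exact hba (le_trans h inf_le_left)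

lemma FF₁_inter (x y : L) :
    FF (EE L) (u₁ d) x ∩ FF (EE L) (u₁ d) y = FF (EE L) (u₁ d) (x ⊓ y) := by
  ext e
  constructor
  · rintro ⟨⟨heE, hx⟩, ⟨-, hy⟩⟩
    exact ⟨heE, le_inf hx hy⟩
  · rintro ⟨heE, hm⟩
    exact ⟨⟨heE, le_trans hm inf_le_left⟩, ⟨heE, le_trans hm inf_le_right⟩⟩

lemma ncard_FF_eq (hab : ¬ a₀ ≤ b₀) (hba : ¬ b₀ ≤ a₀) (x : L) :
    (FF (EE L) (u₂ d a₀ b₀) x).ncard = (FF (EE L) (u₁ d) x).ncard := by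
  set P := KK L * (d a₀ : ℕ) with hP
  set Q := KK L * (d b₀ : ℕ) with hQ
  have hPQ : P ≠ Q := p_ne_q d a₀ b₀ hab
  have hzP : zOf d P = a₀ := zOf_p d a₀
  have hzQ : zOf d Q = b₀ := zOf_q d b₀
  by_cases ha : a₀ ≤ x
  · -- cases A and B : the two set systems give the same flat
    have heq : FF (EE L) (u₂ d a₀ b₀) x = FF (EE L) (u₁ d) x := by
      ext e
      by_cases hp : e = P
      · subst hp
        constructor
        · rintro ⟨heE, -⟩
          exact ⟨heE, by show zOf d P ≤ x; rw [hzP]; exact ha⟩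
        · rintro ⟨heE, -⟩
          exact ⟨heE, by rw [hP, u₂_p]; exact Or.inl ha⟩
      · by_cases hq : e = Q
        · subst hq
          constructor
          · rintro ⟨heE, hx⟩
            rw [u₂_of_ne d a₀ b₀ hp] at hx
            have hx' : z₂ d a₀ b₀ Q ≤ x := hx
            rw [z₂, if_pos rfl] at hx'
            exact ⟨heE, by show zOf d Q ≤ x; rw [hzQ]; exact le_trans le_sup_right hx'⟩
          · rintro ⟨heE, hx⟩
            have hx' : zOf d Q ≤ x := hx
            rw [hzQ] at hx'
            refine ⟨heE, ?_⟩
            rw [u₂_of_ne d a₀ b₀ hp]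
            show z₂ d a₀ b₀ Q ≤ x
            rw [z₂, if_pos rfl]
            exact sup_le ha hx'
        · constructor
          · rintro ⟨heE, hx⟩
            rw [u₂_of_ne d a₀ b₀ hp] at hx
            have hx' : z₂ d a₀ b₀ e ≤ x := hx
            rw [z₂, if_neg hq] at hx'
            exact ⟨heE, hx'⟩
          · rintro ⟨heE, hx⟩
            refine ⟨heE, ?_⟩
            rw [u₂_of_ne d a₀ b₀ hp]
            show z₂ d a₀ b₀ e ≤ x
            rw [z₂, if_neg hq]
            exact hx
    rw [heq]
  · by_cases hb : b₀ ≤ x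
    · -- case C : FF₂ x = insert P (FF₁ x \ {Q})
      have hsup : ¬ a₀ ⊔ b₀ ≤ x := fun hc => ha (le_trans le_sup_left hc)
      have heq : FF (EE L) (u₂ d a₀ b₀) x = insert P (FF (EE L) (u₁ d) x \ {Q}) := by
        ext e
        by_cases hp : e = P
        · subst hp
          simp only [Set.mem_insert_iff, true_or, iff_true]
          exact ⟨p_mem_EE d, by rw [hP, u₂_p]; exact Or.inr hb⟩
        · by_cases hq : e = Q
          · subst hq
            constructor
            · rintro ⟨heE, hx⟩
              rw [u₂_of_ne d a₀ b₀ hp] at hx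
              have hx' : z₂ d a₀ b₀ Q ≤ x := hx
              rw [z₂, if_pos rfl] at hx'
              exact absurd hx' hsup
            · rintro (hc | ⟨-, hc⟩)
              · exact absurd hc (Ne.symm hPQ)
              · exact absurd rfl hc
          · constructor
            · rintro ⟨heE, hx⟩
              rw [u₂_of_ne d a₀ b₀ hp] at hx
              have hx' : z₂ d a₀ b₀ e ≤ x := hx
              rw [z₂, if_neg hq] at hx'
              exact Or.inr ⟨⟨heE, hx'⟩, hq⟩
            · rintro (hc | ⟨⟨heE, hx⟩, -⟩)
              · exact absurd hc hp
              · refine ⟨heE, ?_⟩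
                rw [u₂_of_ne d a₀ b₀ hp]
                show z₂ d a₀ b₀ e ≤ x
                rw [z₂, if_neg hq]
                exact hx
      have hQmem : Q ∈ FF (EE L) (u₁ d) x := ⟨q_mem_EE d, by show zOf d Q ≤ x; rw [hzQ]; exact hb⟩
      have hPnot : P ∉ FF (EE L) (u₁ d) x \ {Q} := by
        rintro ⟨⟨-, hx⟩, -⟩
        have hx' : zOf d P ≤ x := hx
        rw [hzP] at hx'
        exact ha hx'
      rw [heq, Set.ncard_insert_of_notMem hPnot (((EE_finite).subset (FF_subset x)).diff),
        Set.ncard_diff_singleton_of_mem hQmem]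
      have : 1 ≤ (FF (EE L) (u₁ d) x).ncard := by
        rw [Nat.one_le_iff_ne_zero, ← Nat.pos_iff_ne_zero]
        exact (Set.ncard_pos ((EE_finite).subset (FF_subset x))).mpr ⟨Q, hQmem⟩
      omega
    · -- case D : equal again
      have hsup : ¬ a₀ ⊔ b₀ ≤ x := fun hc => ha (le_trans le_sup_left hc)
      have heq : FF (EE L) (u₂ d a₀ b₀) x = FF (EE L) (u₁ d) x := by
        ext e
        by_cases hp : e = P
        · subst hp
          constructor
          · rintro ⟨heE, hx⟩
            rw [hP, u₂_p] at hx
            rcases hx with h | h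
            · exact absurd h ha
            · exact absurd h hb
          · rintro ⟨heE, hx⟩
            have hx' : zOf d P ≤ x := hx
            rw [hzP] at hx'
            exact absurd hx' ha
        · by_cases hq : e = Q
          · subst hq
            constructor
            · rintro ⟨heE, hx⟩
              rw [u₂_of_ne d a₀ b₀ hp] at hx
              have hx' : z₂ d a₀ b₀ Q ≤ x := hx
              rw [z₂, if_pos rfl] at hx'
              exact absurd hx' hsup
            · rintro ⟨heE, hx⟩
              have hx' : zOf d Q ≤ x := hx
              rw [hzQ] at hx'
              exact absurd hx' hb
          · constructor
            · rintro ⟨heE, hx⟩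
              rw [u₂_of_ne d a₀ b₀ hp] at hx
              have hx' : z₂ d a₀ b₀ e ≤ x := hx
              rw [z₂, if_neg hq] at hx'
              exact ⟨heE, hx'⟩
            · rintro ⟨heE, hx⟩
              refine ⟨heE, ?_⟩
              rw [u₂_of_ne d a₀ b₀ hp]
              show z₂ d a₀ b₀ e ≤ x
              rw [z₂, if_neg hq]
              exact hx
      rw [heq]

end Final

end Instantiation

theorem statement18' (L : Type*) [Lattice L] [Fintype L]
    (hL : ∃ x y : L, ¬ x ≤ y ∧ ¬ y ≤ x) :
    ∃ M M' : Matroid ℕ, M.Finite ∧ M'.Finite ∧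
      IsTransversalMatroid M ∧ IsTransversalMatroid M' ∧
      ¬ IsIso M M' ∧ SameConfig M M' ∧
      Nonempty ({F : Set ℕ // CyclicFlat M F} ≃o L) ∧
      Nonempty ({F : Set ℕ // CyclicFlat M' F} ≃o L) := by
  classical
  obtain ⟨a₀, b₀, hab, hba⟩ := hL
  haveI : Nonempty L := ⟨a₀⟩
  letI : BoundedOrder L := Fintype.toBoundedOrder L
  set d : L ≃ Fin (Fintype.card L) := Fintype.equivFin L with hd
  have g₁ : Good (EE L) (u₁ d) := good₁ d
  have g₂ : Good (EE L) (u₂ d a₀ b₀) := good₂ d a₀ b₀ hab hba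
  refine ⟨Mat g₁, Mat g₂, Mat_finite g₁, Mat_finite g₂, isTransversal g₁, isTransversal g₂,
    ?_, ?_, ⟨(latIso g₁).symm⟩, ⟨(latIso g₂).symm⟩⟩
  · -- not isomorphic
    rintro ⟨f, hbij, hind⟩
    choose σ hσ using fun x : L =>
      (RC_iff_FF g₂).mp (RC_image hbij hind ((RC_iff_FF g₁).mpr ⟨x, rfl⟩))
    have hmono : ∀ x y : L, σ x ≤ σ y ↔ x ≤ y := by
      intro x y
      rw [← FF_subset_iff g₂ (x := σ x) (y := σ y), ← hσ, ← hσ,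
        hbij.injOn.image_subset_image_iff (FF_subset (E := EE L) (u := u₁ d) x)
          (FF_subset (E := EE L) (u := u₁ d) y),
        FF_subset_iff g₁]
    have hinjσ : Function.Injective σ := fun x y hxy =>
      le_antisymm ((hmono x y).mp hxy.le) ((hmono y x).mp hxy.ge)
    have hsurjσ : Function.Surjective σ := Finite.surjective_of_injective hinjσ
    obtain ⟨x, hx⟩ := hsurjσ a₀
    obtain ⟨y, hy⟩ := hsurjσ b₀
    have hm : σ (x ⊓ y) = a₀ ⊓ b₀ := by
      apply le_antisymm
      · apply le_inf
        · rw [← hx]; exact (hmono _ _).mpr inf_le_left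
        · rw [← hy]; exact (hmono _ _).mpr inf_le_right
      · obtain ⟨z, hz⟩ := hsurjσ (a₀ ⊓ b₀)
        have hz1 : z ≤ x := (hmono z x).mp (by rw [hz, hx]; exact inf_le_left)
        have hz2 : z ≤ y := (hmono z y).mp (by rw [hz, hy]; exact inf_le_right)
        rw [← hz]
        exact (hmono _ _).mpr (le_inf hz1 hz2)
    have himg1 : f '' FF (EE L) (u₁ d) x = FF (EE L) (u₂ d a₀ b₀) a₀ := by
      rw [hσ x, hx]
    have himg2 : f '' FF (EE L) (u₁ d) y = FF (EE L) (u₂ d a₀ b₀) b₀ := by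
      rw [hσ y, hy]
    have himgm : f '' FF (EE L) (u₁ d) (x ⊓ y) = FF (EE L) (u₂ d a₀ b₀) (a₀ ⊓ b₀) := by
      rw [hσ (x ⊓ y), hm]
    have hinter : FF (EE L) (u₂ d a₀ b₀) a₀ ∩ FF (EE L) (u₂ d a₀ b₀) b₀
        = FF (EE L) (u₂ d a₀ b₀) (a₀ ⊓ b₀) := by
      rw [← himg1, ← himg2,
        ← hbij.injOn.image_inter (FF_subset (E := EE L) (u := u₁ d) x)
          (FF_subset (E := EE L) (u := u₁ d) y),
        FF₁_inter d x y, himgm]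
    have hPmem : KK L * (d a₀ : ℕ) ∈ FF (EE L) (u₂ d a₀ b₀) a₀ ∩ FF (EE L) (u₂ d a₀ b₀) b₀ :=
      ⟨p_mem_FF₂a d, p_mem_FF₂b d⟩
    rw [hinter] at hPmem
    exact p_not_mem_FF₂m d hab hba hPmem
  · -- same configuration
    refine ⟨((latIso g₁).symm).trans (latIso g₂), ?_⟩
    intro F
    set x : L := (latIso g₁).symm F with hxdef
    have hF : (F : Set ℕ) = FF (EE L) (u₁ d) x := by
      have h1 := (latIso g₁).apply_symm_apply F
      have h2 : ((latIso g₁) x : Set ℕ) = FF (EE L) (u₁ d) x := rfl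
      rw [← h2, hxdef, h1]
    have hφ : ((((latIso g₁).symm).trans (latIso g₂)) F : Set ℕ)
        = FF (EE L) (u₂ d a₀ b₀) x := rfl
    constructor
    · rw [hφ, hF]
      exact ncard_FF_eq d hab hba x
    · rw [hφ, hF, rnk_FF g₂ x, rnk_FF g₁ x]



theorem statement18 (L : Type*) [Lattice L] [Fintype L]
    (hL : ∃ x y : L, ¬ x ≤ y ∧ ¬ y ≤ x) :
    ∃ M M' : Matroid ℕ, M.Finite ∧ M'.Finite ∧
      IsTransversalMatroid M ∧ IsTransversalMatroid M' ∧
      ¬ IsIso M M' ∧ SameConfig M M' ∧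
      Nonempty ({F : Set ℕ // CyclicFlat M F} ≃o L) ∧
      Nonempty ({F : Set ℕ // CyclicFlat M' F} ≃o L) := by
  exact statement18' L hL

end Paper
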